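/- arXiv:math/0004055 — 5 statements merged into one kernel-verified Lean document; each statement's English description precedes it below -/
import Mathlib

section
/- For any integer k ≥ 1, p_k(X/(1-tX)) = ∑_{μ, |μ|≥k} t^{|μ|-k} C(|μ|, k) (-1)^{|μ|-ℓ(μ)} · k·(ℓ(μ)-1)! / ∏_i m_i(μ)! · e_μ(X), where the sum is over all partitions μ with |μ| ≥ k. -/
/-- `⟨μ choose k⟩`: the number of `k`-element subsets of the Ferrers diagram of `μ`
containing at least one cell in each row. -/
def genBinom (μ : Multiset ℕ) (k : ℕ) : ℕ :=
  let l := μ.sort (· ≤ ·)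
  ((Finset.univ : Finset (Finset ((i : Fin l.length) × Fin (l.get i)))).filter
    (fun s => s.card = k ∧ ∀ i : Fin l.length, ∃ c ∈ s, c.1 = i)).card

/-- `z_μ = ∏ᵢ i^{mᵢ(μ)} mᵢ(μ)!`. -/
def zPart {n : ℕ} (μ : n.Partition) : ℚ :=
  (μ.parts.map (fun i => (i : ℚ))).prod *
    ∏ i ∈ μ.parts.toFinset, (Nat.factorial (μ.parts.count i) : ℚ)

/-- Elementary symmetric polynomial `e_j` evaluated at a finite family. -/
def esymmVal {N : ℕ} {R : Type*} [CommRing R] (x : Fin N → R) (j : ℕ) : R :=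
  ∑ s ∈ Finset.univ.powersetCard j, ∏ r ∈ s, x r


def wms (s : Multiset ℕ) : ℚ :=
  (-1) ^ (s.sum + Multiset.card s) * (s.sum * Nat.factorial (Multiset.card s - 1)) /
    ∏ i ∈ s.toFinset, (Nat.factorial (s.count i) : ℚ)

lemma denom_ne_zero (s : Multiset ℕ) :
    (∏ i ∈ s.toFinset, (Nat.factorial (s.count i) : ℚ)) ≠ 0 :=
  Finset.prod_ne_zero_iff.mpr fun i _ => Nat.cast_ne_zero.mpr (Nat.factorial_ne_zero _)

lemma denom_erase (s : Multiset ℕ) {i : ℕ} (hi : i ∈ s) :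
    (↑(s.count i) : ℚ) * ∏ j ∈ (s.erase i).toFinset, (Nat.factorial ((s.erase i).count j) : ℚ) =
      ∏ j ∈ s.toFinset, (Nat.factorial (s.count j) : ℚ) := by
  classical
  have hmem : i ∈ s.toFinset := Multiset.mem_toFinset.mpr hi
  have hsub : (s.erase i).toFinset ⊆ s.toFinset := by
    intro j hj
    rw [Multiset.mem_toFinset] at *
    exact Multiset.mem_of_mem_erase hj
  have h1 : ∏ j ∈ (s.erase i).toFinset, (Nat.factorial ((s.erase i).count j) : ℚ)
      = ∏ j ∈ s.toFinset, (Nat.factorial ((s.erase i).count j) : ℚ) := by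
    apply Finset.prod_subset hsub
    intro j _ hj'
    have : (s.erase i).count j = 0 := Multiset.count_eq_zero.mpr (by simpa using hj')
    simp [this]
  rw [h1, ← Finset.mul_prod_erase _ _ hmem,
    ← Finset.mul_prod_erase _ (fun j => (Nat.factorial (s.count j) : ℚ)) hmem, ← mul_assoc]
  congr 1
  · rw [Multiset.count_erase_self]
    rw_mod_cast [Nat.mul_factorial_pred (Multiset.count_pos.mpr hi).ne']
  · exact Finset.prod_congr rfl fun j hj => by
      rw [Multiset.count_erase_of_ne (Finset.ne_of_mem_erase hj)]

lemma cast_msum (s : Multiset ℕ) :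
    (Multiset.map (fun i : ℕ => (i:ℚ)) s).sum = (s.sum : ℚ) := by
  induction s using Multiset.induction_on with
  | empty => simp
  | cons a t ih =>
    rw [Multiset.map_cons, Multiset.sum_cons, ih, Multiset.sum_cons]
    push_cast
    ring

lemma wms_erase_sum (s : Multiset ℕ) (h2 : 2 ≤ Multiset.card s) :
    ∑ i ∈ s.toFinset, (-1:ℚ)^(i+1) * wms (s.erase i) = wms s := by
  classical
  have hD0 : (∏ i ∈ s.toFinset, (Nat.factorial (s.count i) : ℚ)) ≠ 0 := denom_ne_zero s
  have key : ∀ i ∈ s.toFinset, (-1:ℚ)^(i+1) * wms (s.erase i)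
      = ((-1:ℚ)^(s.sum + Multiset.card s) * (Nat.factorial (Multiset.card s - 2) : ℚ) /
          ∏ j ∈ s.toFinset, (Nat.factorial (s.count j) : ℚ)) *
        (((s.sum:ℚ) - i) * s.count i) := by
    intro i hi
    have his : i ∈ s := Multiset.mem_toFinset.mp hi
    have hcons : i ::ₘ s.erase i = s := Multiset.cons_erase his
    have hsum : i + (s.erase i).sum = s.sum := by
      conv_rhs => rw [← hcons]
      simp
    have hcard : Multiset.card (s.erase i) + 1 = Multiset.card s := by
      conv_rhs => rw [← hcons]
      simp [add_comm]
    have hcount : (0:ℚ) < s.count i := by exact_mod_cast Multiset.count_pos.mpr his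
    have hDe := denom_erase s his
    rw [wms]
    have hesum : ((s.erase i).sum : ℚ) = (s.sum:ℚ) - i := by
      push_cast [← hsum]; ring
    have hecard2 : Multiset.card (s.erase i) - 1 = Multiset.card s - 2 := by omega
    have hsign : (-1:ℚ)^(i+1) * (-1)^((s.erase i).sum + Multiset.card (s.erase i))
        = (-1)^(s.sum + Multiset.card s) := by
      rw [← pow_add]
      congr 1
      omega
    have hfrac : (∏ j ∈ (s.erase i).toFinset, (Nat.factorial ((s.erase i).count j) : ℚ))
        = (∏ j ∈ s.toFinset, (Nat.factorial (s.count j) : ℚ)) / s.count i := by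
      field_simp [← hDe]
      rw [mul_comm, hDe]
    rw [hecard2, hfrac, div_div_eq_mul_div, hesum, ← hsign]
    ring
  rw [Finset.sum_congr rfl key, ← Finset.mul_sum]
  have hcnt : ∑ i ∈ s.toFinset, ((s.count i : ℚ)) = (Multiset.card s : ℚ) := by
    exact_mod_cast congrArg (Nat.cast : ℕ → ℚ) (Multiset.toFinset_sum_count_eq s)
  have hsm : ∑ i ∈ s.toFinset, ((i:ℚ) * s.count i) = (s.sum : ℚ) := by
    have h1 := Finset.sum_multiset_map_count s (fun i : ℕ => (i:ℚ))
    rw [cast_msum] at h1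
    rw [h1]
    exact Finset.sum_congr rfl fun i _ => by rw [nsmul_eq_mul]; ring
  have hexp : ∑ i ∈ s.toFinset, (((s.sum:ℚ) - i) * s.count i)
      = (s.sum:ℚ) * ((Multiset.card s : ℚ) - 1) := by
    have h : ∀ i ∈ s.toFinset, ((s.sum:ℚ) - i) * s.count i
        = (s.sum:ℚ) * s.count i - (i:ℚ) * s.count i := fun i _ => by ring
    rw [Finset.sum_congr rfl h, Finset.sum_sub_distrib, ← Finset.mul_sum, hcnt, hsm]
    ring
  rw [hexp, wms]
  have hfact : ((Multiset.card s - 1).factorial : ℚ)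
      = ((Multiset.card s : ℚ) - 1) * ((Multiset.card s - 2).factorial : ℚ) := by
    have h1 : Multiset.card s - 1 = (Multiset.card s - 2) + 1 := by omega
    rw [h1, Nat.factorial_succ, Nat.cast_mul, Nat.cast_add, Nat.cast_sub h2]
    ring
  rw [div_mul_eq_mul_div, div_eq_div_iff hD0 hD0, hfact]
  push_cast
  ring

open MvPolynomial Finset in
lemma poly_erase_sum (N : ℕ) (s : Multiset ℕ) (hs : 2 ≤ Multiset.card s) :
    ∑ i ∈ s.toFinset, (-1:MvPolynomial (Fin N) ℚ)^(i+1) * esymm (Fin N) ℚ i *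
        (C (wms (s.erase i)) * ((s.erase i).map (esymm (Fin N) ℚ)).prod)
      = C (wms s) * (s.map (esymm (Fin N) ℚ)).prod := by
  have h : ∀ i ∈ s.toFinset, (-1:MvPolynomial (Fin N) ℚ)^(i+1) * esymm (Fin N) ℚ i *
        (C (wms (s.erase i)) * ((s.erase i).map (esymm (Fin N) ℚ)).prod)
      = C ((-1:ℚ)^(i+1) * wms (s.erase i)) * (s.map (esymm (Fin N) ℚ)).prod := by
    intro i hi
    rw [← Multiset.prod_map_erase (f := esymm (Fin N) ℚ) (Multiset.mem_toFinset.mp hi),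
      map_mul, map_pow, map_neg, map_one]
    ring
  rw [Finset.sum_congr rfl h, ← Finset.sum_mul, ← map_sum, wms_erase_sum s hs]

lemma part_heq {m m' : ℕ} (h : m = m') (μ : Nat.Partition m) (ν : Nat.Partition m')
    (hp : μ.parts = ν.parts) : HEq μ ν := by
  subst h
  exact heq_of_eq (Nat.Partition.ext hp)

open MvPolynomial Finset in
lemma swap_sum (N n : ℕ) (hn : 0 < n) :
    ∑ a ∈ (Finset.HasAntidiagonal.antidiagonal n).filter (fun a => a.1 ∈ Set.Ioo 0 n),
      ((-1:MvPolynomial (Fin N) ℚ)^(a.1+1) * esymm (Fin N) ℚ a.1 *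
        ∑ μ : Nat.Partition a.2, C (wms μ.parts) * (μ.parts.map (esymm (Fin N) ℚ)).prod)
    = ∑ μ ∈ Finset.univ.filter (fun μ : Nat.Partition n => ¬ Multiset.card μ.parts = 1),
        C (wms μ.parts) * (μ.parts.map (esymm (Fin N) ℚ)).prod := by
  classical
  set F := (Finset.HasAntidiagonal.antidiagonal n).filter (fun a => a.1 ∈ Set.Ioo 0 n) with hF
  set Q := Finset.univ.filter (fun μ : Nat.Partition n => ¬ Multiset.card μ.parts = 1) with hQ
  have hQ2 : ∀ μ ∈ Q, 2 ≤ Multiset.card μ.parts := by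
    intro μ hμ
    rw [hQ, Finset.mem_filter] at hμ
    have h0 : Multiset.card μ.parts ≠ 0 := by
      intro h0
      have hps := μ.parts_sum
      rw [Multiset.card_eq_zero.mp h0, Multiset.sum_zero] at hps
      omega
    have h1 := hμ.2
    omega
  calc
    ∑ a ∈ F, ((-1:MvPolynomial (Fin N) ℚ)^(a.1+1) * esymm (Fin N) ℚ a.1 *
        ∑ μ : Nat.Partition a.2, C (wms μ.parts) * (μ.parts.map (esymm (Fin N) ℚ)).prod)
      = ∑ x ∈ F.sigma (fun a => (Finset.univ : Finset (Nat.Partition a.2))),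
          ((-1:MvPolynomial (Fin N) ℚ)^(x.1.1+1) * esymm (Fin N) ℚ x.1.1 *
            (C (wms x.2.parts) * (x.2.parts.map (esymm (Fin N) ℚ)).prod)) := by
        rw [Finset.sum_congr rfl (fun a _ => Finset.mul_sum Finset.univ
          (fun μ : Nat.Partition a.2 => C (wms μ.parts) *
            (μ.parts.map (esymm (Fin N) ℚ)).prod)
          ((-1:MvPolynomial (Fin N) ℚ)^(a.1+1) * esymm (Fin N) ℚ a.1))]
        exact Finset.sum_sigma' F (fun a => (Finset.univ : Finset (Nat.Partition a.2)))
          (fun a b => (-1:MvPolynomial (Fin N) ℚ)^(a.1+1) * esymm (Fin N) ℚ a.1 *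
            (C (wms b.parts) * (b.parts.map (esymm (Fin N) ℚ)).prod))
    _ = ∑ y ∈ Q.sigma (fun μ => μ.parts.toFinset),
          ((-1:MvPolynomial (Fin N) ℚ)^(y.2+1) * esymm (Fin N) ℚ y.2 *
            (C (wms (y.1.parts.erase y.2)) *
              ((y.1.parts.erase y.2).map (esymm (Fin N) ℚ)).prod)) := by
        refine Finset.sum_bij'
          (fun x hx => ⟨⟨x.1.1 ::ₘ x.2.parts, by
              intro j hj
              rw [Multiset.mem_cons] at hj
              rcases hj with rfl | hj
              · have hx' := (Finset.mem_sigma.mp hx).1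
                rw [hF, Finset.mem_filter] at hx'
                exact hx'.2.1
              · exact x.2.parts_pos hj, by
              rw [Multiset.sum_cons, x.2.parts_sum]
              have hx' := (Finset.mem_sigma.mp hx).1
              rw [hF, Finset.mem_filter, Finset.HasAntidiagonal.mem_antidiagonal] at hx'
              exact hx'.1⟩, x.1.1⟩)
          (fun y hy => ⟨(y.2, n - y.2), ⟨y.1.parts.erase y.2, by
              intro j hj
              exact y.1.parts_pos (Multiset.mem_of_mem_erase hj), by
              have hy' := Finset.mem_sigma.mp hy
              have hmem : y.2 ∈ y.1.parts := Multiset.mem_toFinset.mp hy'.2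
              have hc : y.2 ::ₘ y.1.parts.erase y.2 = y.1.parts := Multiset.cons_erase hmem
              have hsum : y.2 + (y.1.parts.erase y.2).sum = n := by
                conv_rhs => rw [← y.1.parts_sum, ← hc]
                simp
              omega⟩⟩)
          ?_ ?_ ?_ ?_ ?_
        · -- hi : maps into Q.sigma
          intro x hx
          have hx' := Finset.mem_sigma.mp hx
          have hF' := hx'.1
          rw [hF, Finset.mem_filter, Finset.HasAntidiagonal.mem_antidiagonal] at hF'
          rw [Finset.mem_sigma]
          constructor
          · rw [hQ, Finset.mem_filter]
            refine ⟨Finset.mem_univ _, ?_⟩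
            have h0 : x.2.parts ≠ 0 := by
              intro h0
              have hps := x.2.parts_sum
              rw [h0, Multiset.sum_zero] at hps
              have h2' := hF'.2
              rw [Set.mem_Ioo] at h2'
              omega
            have hcard : 0 < Multiset.card x.2.parts := Multiset.card_pos.mpr h0
            simp only [Multiset.card_cons]
            omega
          · simp only [Multiset.mem_toFinset]
            exact Multiset.mem_cons_self _ _
        · -- hj : maps into F.sigma
          intro y hy
          dsimp only
          have hy' := Finset.mem_sigma.mp hy
          have hmem : y.2 ∈ y.1.parts := Multiset.mem_toFinset.mp hy'.2
          have hc : y.2 ::ₘ y.1.parts.erase y.2 = y.1.parts := Multiset.cons_erase hmem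
          have hsum : y.2 + (y.1.parts.erase y.2).sum = n := by
            conv_rhs => rw [← y.1.parts_sum, ← hc]
            simp
          have h2 := hQ2 y.1 hy'.1
          have hpos : 0 < (y.1.parts.erase y.2).sum := by
            have hcard : 0 < Multiset.card (y.1.parts.erase y.2) := by
              rw [Multiset.card_erase_of_mem hmem, Nat.pred_eq_sub_one]
              omega
            obtain ⟨q, hq⟩ := Multiset.card_pos_iff_exists_mem.mp hcard
            have hqpos : 0 < q := y.1.parts_pos (Multiset.mem_of_mem_erase hq)
            have := Multiset.single_le_sum (fun x _ => Nat.zero_le x) q hq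
            omega
          rw [Finset.mem_sigma]
          constructor
          · rw [hF, Finset.mem_filter, Finset.HasAntidiagonal.mem_antidiagonal]
            dsimp only
            refine ⟨by omega, ?_⟩
            rw [Set.mem_Ioo]
            exact ⟨y.1.parts_pos hmem, by omega⟩
          · exact Finset.mem_univ _
        · -- left inverse
          intro x hx
          dsimp only
          apply Sigma.ext
          · simp only
            have hx' := Finset.mem_sigma.mp hx
            have hF' := hx'.1
            rw [hF, Finset.mem_filter, Finset.HasAntidiagonal.mem_antidiagonal] at hF'
            have : n - x.1.1 = x.1.2 := by omega
            exact Prod.ext rfl this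
          · simp only
            apply part_heq
            · have hx' := Finset.mem_sigma.mp hx
              have hF' := hx'.1
              rw [hF, Finset.mem_filter, Finset.HasAntidiagonal.mem_antidiagonal] at hF'
              omega
            · simp [Multiset.erase_cons_head]
        · -- right inverse
          intro y hy
          dsimp only
          apply Sigma.ext
          · simp only
            apply Nat.Partition.ext
            simp only
            exact Multiset.cons_erase (Multiset.mem_toFinset.mp (Finset.mem_sigma.mp hy).2)
          · simp only
            exact HEq.rfl
        · -- values
          intro x hx
          dsimp only
          simp only [Multiset.erase_cons_head]
    _ = ∑ μ ∈ Q, C (wms μ.parts) * (μ.parts.map (esymm (Fin N) ℚ)).prod := by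
        rw [Finset.sum_sigma]
        exact Finset.sum_congr rfl fun μ hμ => poly_erase_sum N μ.parts (hQ2 μ hμ)

def onePart (n : ℕ) (hn : 0 < n) : Nat.Partition n :=
  ⟨{n}, fun hi => by rw [Multiset.mem_singleton] at hi; omega, by simp⟩

lemma wms_singleton (n : ℕ) : wms {n} = (-1:ℚ)^(n+1) * n := by
  simp [wms, Nat.factorial]

open MvPolynomial Finset in
lemma core (N : ℕ) : ∀ n, 0 < n →
    psum (Fin N) ℚ n =
      ∑ μ : Nat.Partition n, C (wms μ.parts) * (μ.parts.map (esymm (Fin N) ℚ)).prod := by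
  intro n
  induction n using Nat.strong_induction_on with
  | _ n ih =>
  intro hn
  rw [psum_eq_mul_esymm_sub_sum (Fin N) ℚ n hn]
  have hrec : ∀ a ∈ (Finset.HasAntidiagonal.antidiagonal n).filter (fun a => a.1 ∈ Set.Ioo 0 n),
      (-1:MvPolynomial (Fin N) ℚ)^a.1 * esymm (Fin N) ℚ a.1 * psum (Fin N) ℚ a.2
      = -((-1:MvPolynomial (Fin N) ℚ)^(a.1+1) * esymm (Fin N) ℚ a.1 *
          ∑ μ : Nat.Partition a.2, C (wms μ.parts) * (μ.parts.map (esymm (Fin N) ℚ)).prod) := by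
    intro a ha
    rw [Finset.mem_filter, Finset.HasAntidiagonal.mem_antidiagonal] at ha
    have h1 : 0 < a.1 := ha.2.1
    have h2 : a.1 < n := ha.2.2
    rw [ih a.2 (by omega) (by omega), pow_succ]
    ring
  rw [Finset.sum_congr rfl hrec, Finset.sum_neg_distrib, sub_neg_eq_add, swap_sum N n hn]
  rw [← Finset.sum_filter_add_sum_filter_not Finset.univ
    (fun μ : Nat.Partition n => Multiset.card μ.parts = 1)
    (fun μ : Nat.Partition n => C (wms μ.parts) * (μ.parts.map (esymm (Fin N) ℚ)).prod)]
  congr 1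
  have hone : (Finset.univ.filter fun μ : Nat.Partition n => Multiset.card μ.parts = 1)
      = {onePart n hn} := by
    ext μ
    simp only [Finset.mem_filter, Finset.mem_univ, true_and, Finset.mem_singleton]
    constructor
    · intro h
      obtain ⟨a, ha⟩ := Multiset.card_eq_one.mp h
      have han : a = n := by
        have hps := μ.parts_sum
        rw [ha, Multiset.sum_singleton] at hps
        omega
      apply Nat.Partition.ext
      rw [ha, han]
      rfl
    · intro h
      rw [h]
      rfl
  rw [hone, Finset.sum_singleton]
  show (-1:MvPolynomial (Fin N) ℚ)^(n+1) * (n:MvPolynomial (Fin N) ℚ) * esymm (Fin N) ℚ n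
    = C (wms ({n} : Multiset ℕ)) * ((({n} : Multiset ℕ)).map (esymm (Fin N) ℚ)).prod
  rw [wms_singleton, map_mul, map_pow, map_neg, map_one, map_natCast,
    Multiset.map_singleton, Multiset.prod_singleton]

lemma aeval_esymm {R : Type*} [CommRing R] [Algebra ℚ R] (N : ℕ) (x : Fin N → R) (j : ℕ) :
    MvPolynomial.aeval x (MvPolynomial.esymm (Fin N) ℚ j) = esymmVal x j := by
  rw [MvPolynomial.esymm, esymmVal, map_sum]
  exact Finset.sum_congr rfl fun s _ => by rw [map_prod]; simp

lemma core_val {R : Type*} [CommRing R] [Algebra ℚ R] (N n : ℕ) (hn : 0 < n) (x : Fin N → R) :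
    ∑ r, x r ^ n = ∑ μ : Nat.Partition n,
      algebraMap ℚ R (wms μ.parts) * (μ.parts.map (fun p => esymmVal x p)).prod := by
  have h := congrArg (MvPolynomial.aeval x) (core N n hn)
  rw [MvPolynomial.psum, map_sum, map_sum] at h
  simp only [map_pow, MvPolynomial.aeval_X] at h
  rw [h]
  refine Finset.sum_congr rfl fun μ _ => ?_
  rw [map_mul, MvPolynomial.aeval_C, map_multiset_prod, Multiset.map_map]
  congr 1
  exact congrArg Multiset.prod (Multiset.map_congr rfl fun p _ => aeval_esymm N x p)

lemma coeffA {R : Type*} [CommRing R] (y : R) (k : ℕ) : ∀ m,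
    PowerSeries.coeff m ((PowerSeries.mk fun j => y^(j+1))^(k+1)) =
      ((m+k).choose k : R) * y^(m+k+1) := by
  induction k with
  | zero => intro m; simp
  | succ k ihk =>
    intro m
    rw [pow_succ, PowerSeries.coeff_mul, Finset.Nat.sum_antidiagonal_eq_sum_range_succ_mk]
    have h : ∀ i ∈ Finset.range (m+1),
        PowerSeries.coeff i ((PowerSeries.mk fun j => y^(j+1))^(k+1)) *
          PowerSeries.coeff (m - i) (PowerSeries.mk fun j => y^(j+1))
        = ((i+k).choose k : R) * y^(m+k+2) := by
      intro i hi
      rw [Finset.mem_range] at hi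
      rw [ihk i, PowerSeries.coeff_mk, mul_assoc, ← pow_add]
      congr 2
      omega
    rw [Finset.sum_congr rfl h, ← Finset.sum_mul, ← Nat.cast_sum]
    have hh : ∀ M, ∑ i ∈ Finset.range (M+1), (i+k).choose k = (M+k+1).choose (k+1) := by
      intro M
      induction M with
      | zero => simp
      | succ M ihm =>
        rw [Finset.sum_range_succ, ihm]
        rw [show M+1+k+1 = (M+k+1)+1 from by omega, Nat.choose_succ_succ' (M+k+1) k]
        rw [show M+1+k = M+k+1 from by omega]
        omega
    have hh := hh m
    rw [hh]
    rfl

/-- For `k ≥ 1`,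
`p_k(X/(1-tX)) = ∑_{|μ|≥k} t^{|μ|-k} C(|μ|,k) (-1)^{|μ|-ℓ(μ)} k(ℓ(μ)-1)!/∏ᵢ mᵢ(μ)! · e_μ(X)`:
the coefficient of `t^m` collects the partitions `μ` of `m + k`. -/
theorem powerSum_shifted_eq_esymm_expansion {R : Type*} [CommRing R] [Algebra ℚ R]
    (N : ℕ) (x : Fin N → R) (k : ℕ) (hk : 1 ≤ k) :
    (∑ r : Fin N, (PowerSeries.mk fun m => x r ^ (m + 1)) ^ k) =
      PowerSeries.mk fun m =>
        ∑ μ : Nat.Partition (m + k),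
          algebraMap ℚ R (((m + k).choose k : ℚ) * (-1) ^ ((m + k) + Multiset.card μ.parts) *
              (k * Nat.factorial (Multiset.card μ.parts - 1)) /
              ∏ i ∈ μ.parts.toFinset, (Nat.factorial (μ.parts.count i) : ℚ)) *
            (μ.parts.map (fun p => esymmVal x p)).prod := by
  obtain ⟨k', rfl⟩ : ∃ k', k = k' + 1 := ⟨k - 1, by omega⟩
  ext m
  rw [map_sum, PowerSeries.coeff_mk]
  rw [Finset.sum_congr rfl (fun r _ => coeffA (x r) k' m), ← Finset.mul_sum]
  have hN : (m+k'+1).choose (k'+1) * (k'+1) = (m+k').choose k' * (m+k'+1) := by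
    rw [mul_comm ((m+k').choose k') (m+k'+1)]
    exact (Nat.add_one_mul_choose_eq (m+k') k').symm
  have hnat : (((m+(k'+1)).choose (k'+1)) : ℚ) * ((k':ℚ)+1)
      = (((m+k').choose k') : ℚ) * ((m:ℚ)+(k':ℚ)+1) := by
    exact_mod_cast hN
  have hcoef : ∀ μ : Nat.Partition (m + (k'+1)),
      (((m + (k'+1)).choose (k'+1) : ℚ) * (-1) ^ ((m + (k'+1)) + Multiset.card μ.parts) *
        ((k'+1 : ℕ) * Nat.factorial (Multiset.card μ.parts - 1)) /
        ∏ i ∈ μ.parts.toFinset, (Nat.factorial (μ.parts.count i) : ℚ))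
      = ((m+k').choose k' : ℚ) * wms μ.parts := by
    intro μ
    rw [wms, μ.parts_sum, ← mul_div_assoc]
    congr 1
    push_cast
    linear_combination ((-1:ℚ)^(m+(k'+1)+Multiset.card μ.parts) *
      (Nat.factorial (Multiset.card μ.parts - 1) : ℚ)) * hnat
  have h2 : ∀ μ : Nat.Partition (m + (k'+1)),
      algebraMap ℚ R (((m + (k'+1)).choose (k'+1) : ℚ) *
          (-1) ^ ((m + (k'+1)) + Multiset.card μ.parts) *
          ((k'+1 : ℕ) * Nat.factorial (Multiset.card μ.parts - 1)) /
          ∏ i ∈ μ.parts.toFinset, (Nat.factorial (μ.parts.count i) : ℚ)) *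
        (μ.parts.map (fun p => esymmVal x p)).prod
      = ((m+k').choose k' : R) *
        (algebraMap ℚ R (wms μ.parts) * (μ.parts.map (fun p => esymmVal x p)).prod) := by
    intro μ
    rw [hcoef μ, map_mul, map_natCast, mul_assoc]
  rw [Finset.sum_congr rfl (fun μ _ => h2 μ), ← Finset.mul_sum,
    ← core_val N (m+(k'+1)) (by omega) x]
  rfl
end

section
/- For any integer k ≥ 1, p_k(X/(1-tX)) = ∑_{μ, |μ|≥k} t^{|μ|-k} C(|μ|, k) (-1)^{ℓ(μ)-1} · k·(ℓ(μ)-1)! / ∏_i m_i(μ)! · h_μ(X), where the sum is over all partitions μ with |μ| ≥ k. -/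
/-- Complete homogeneous symmetric polynomial `h_j` evaluated at a finite family. -/
def hsymmVal {N : ℕ} {R : Type*} [CommRing R] (x : Fin N → R) (j : ℕ) : R :=
  ∑ m : Sym (Fin N) j, (m.1.map x).prod

section Aux
variable {R : Type*} [CommRing R] [Algebra ℚ R] {N : ℕ}

/-- weight of a multiset of parts -/
noncomputable def Wq (P : Multiset ℕ) : ℚ :=
  (-1) ^ (Multiset.card P - 1) * ((P.sum : ℚ) * Nat.factorial (Multiset.card P - 1)) /
    ∏ i ∈ P.toFinset, (Nat.factorial (P.count i) : ℚ)

noncomputable def qval (x : Fin N → R) (n : ℕ) : R :=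
  ∑ μ : n.Partition, algebraMap ℚ R (Wq μ.parts) * (μ.parts.map (fun p => hsymmVal x p)).prod

noncomputable def pval (x : Fin N → R) (n : ℕ) : R := ∑ r, x r ^ n

lemma hsymmVal_zero (x : Fin N → R) : hsymmVal x 0 = 1 := by
  rw [hsymmVal]
  rw [Finset.sum_eq_single_of_mem default (Finset.mem_univ _)]
  · have : (default : Sym (Fin N) 0).1 = 0 := rfl
    rw [this]; simp
  · intro b _ hb; exact absurd (Subsingleton.elim b default) hb

lemma geom_pow (y : R) (k' : ℕ) :
    (PowerSeries.mk fun m => y ^ (m + 1)) ^ (k' + 1) =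
      PowerSeries.mk fun m => ((m + k').choose k' : ℕ) * y ^ (m + k' + 1) := by
  induction k' with
  | zero => ext m; simp
  | succ k' ih =>
    ext m
    rw [pow_succ, ih, PowerSeries.coeff_mul, PowerSeries.coeff_mk]
    simp only [PowerSeries.coeff_mk]
    rw [Finset.Nat.sum_antidiagonal_eq_sum_range_succ_mk]
    have hcast : ∀ i ∈ Finset.range (m + 1),
        ((i + k').choose k' : R) * y ^ (i + k' + 1) * y ^ (m - i + 1)
          = ((i + k').choose k' : R) * y ^ (m + (k' + 1) + 1) := by
      intro i hi
      rw [Finset.mem_range] at hi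
      rw [mul_assoc, ← pow_add]
      congr 2
      omega
    rw [Finset.sum_congr rfl hcast, ← Finset.sum_mul, ← Nat.cast_sum]
    have hre : ∑ i ∈ Finset.range (m + 1), (i + k').choose k'
        = (m + (k' + 1)).choose (k' + 1) := by
      have h1 := Nat.sum_Icc_choose (m + k') k'
      have h2 : ∑ i ∈ Finset.range (m + 1), (i + k').choose k'
          = ∑ j ∈ Finset.Icc k' (m + k'), j.choose k' := by
        refine Finset.sum_nbij' (fun i => i + k') (fun j => j - k') ?_ ?_ ?_ ?_ ?_ <;>
          (intro a ha; simp only [Finset.mem_range, Finset.mem_Icc] at *) <;>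
          first | rfl | omega | (congr 1; omega)
      rw [h2, h1, Nat.add_assoc]
    rw [hre]

lemma sum_count_univ (M : Multiset (Fin N)) : ∑ r : Fin N, M.count r = Multiset.card M := by
  rw [← Multiset.toFinset_sum_count_eq]
  symm
  apply Finset.sum_subset (Finset.subset_univ _)
  intro r _ hr
  exact Multiset.count_eq_zero.2 (fun h => hr (Multiset.mem_toFinset.2 h))

lemma lemB (x : Fin N → R) (n : ℕ) :
    ∑ j ∈ Finset.Icc 1 n, pval x j * hsymmVal x (n - j) = n • hsymmVal x n := by
  have step1 : ∑ j ∈ Finset.Icc 1 n, pval x j * hsymmVal x (n - j)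
      = ∑ a ∈ (Finset.Icc 1 n).sigma (fun j => (Finset.univ : Finset (Fin N)).sigma
          (fun _ => (Finset.univ : Finset (Sym (Fin N) (n - j))))),
        x a.2.1 ^ a.1 * (a.2.2.1.map x).prod := by
    rw [Finset.sum_sigma]
    refine Finset.sum_congr rfl fun j _ => ?_
    rw [Finset.sum_sigma]
    rw [pval, hsymmVal, Finset.sum_mul_sum]
  have step3 : ∑ b ∈ (Finset.univ : Finset (Sym (Fin N) n)).sigma
        (fun M => (Finset.univ : Finset (Fin N)).sigma (fun r => Finset.Icc 1 (M.1.count r))),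
        ((b.1.1.map x).prod) = n • hsymmVal x n := by
    rw [Finset.sum_sigma, hsymmVal, Finset.smul_sum]
    refine Finset.sum_congr rfl fun M _ => ?_
    rw [Finset.sum_sigma]
    simp only [Finset.sum_const, Nat.card_Icc]
    rw [← Finset.sum_smul]
    congr 1
    have : ∀ r : Fin N, M.1.count r + 1 - 1 = M.1.count r := fun r => by omega
    rw [Finset.sum_congr rfl (fun r _ => this r), sum_count_univ, M.2]
  rw [step1, ← step3]
  refine Finset.sum_bij'
    (fun a ha => ⟨⟨Multiset.replicate a.1 a.2.1 + a.2.2.1, by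
        have hj := (Finset.mem_sigma.mp ha).1
        rw [Finset.mem_Icc] at hj
        rw [Multiset.card_add, Multiset.card_replicate, a.2.2.2]
        omega⟩, a.2.1, a.1⟩)
    (fun b hb => ⟨b.2.2, b.2.1, ⟨b.1.1 - Multiset.replicate b.2.2 b.2.1, by
        have hj := (Finset.mem_sigma.mp (Finset.mem_sigma.mp hb).2).2
        rw [Finset.mem_Icc] at hj
        have hle : Multiset.replicate b.2.2 b.2.1 ≤ b.1.1 :=
          Multiset.le_count_iff_replicate_le.mp hj.2
        rw [Multiset.card_sub hle, Multiset.card_replicate, b.1.2]⟩⟩)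
    ?_ ?_ ?_ ?_ ?_
  · rintro ⟨j, r, m⟩ ha
    have hj := (Finset.mem_sigma.mp ha).1
    rw [Finset.mem_Icc] at hj
    refine Finset.mem_sigma.mpr ⟨Finset.mem_univ _, Finset.mem_sigma.mpr
      ⟨Finset.mem_univ _, Finset.mem_Icc.mpr ⟨hj.1, ?_⟩⟩⟩
    show j ≤ (Multiset.replicate j r + m.1).count r
    rw [Multiset.count_add, Multiset.count_replicate_self]
    omega
  · rintro ⟨M, r, j⟩ hb
    have hj : 1 ≤ j ∧ j ≤ Multiset.count r M.1 :=
      Finset.mem_Icc.mp (Finset.mem_sigma.mp (Finset.mem_sigma.mp hb).2).2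
    have hcount : M.1.count r ≤ Multiset.card M.1 := Multiset.count_le_card _ _
    refine Finset.mem_sigma.mpr ⟨Finset.mem_Icc.mpr ⟨hj.1, ?_⟩, Finset.mem_sigma.mpr
      ⟨Finset.mem_univ _, Finset.mem_univ _⟩⟩
    rw [M.2] at hcount
    show j ≤ n
    omega
  · rintro ⟨j, r, m⟩ _
    refine congrArg (fun z => (⟨j, r, z⟩ : Σ j : ℕ, Σ _ : Fin N, Sym (Fin N) (n - j))) ?_
    exact Sym.coe_injective (add_tsub_cancel_left _ _)
  · rintro ⟨M, r, j⟩ hb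
    have hj := (Finset.mem_sigma.mp (Finset.mem_sigma.mp hb).2).2
    rw [Finset.mem_Icc] at hj
    have hle : Multiset.replicate j r ≤ M.1 :=
      Multiset.le_count_iff_replicate_le.mp hj.2
    refine Sigma.ext ?_ (heq_of_eq ?_)
    · exact Sym.coe_injective (add_tsub_cancel_of_le hle)
    · rfl
  · rintro ⟨j, r, m⟩ _
    simp only [Multiset.map_add, Multiset.prod_add, Multiset.map_replicate,
      Multiset.prod_replicate]

lemma prod_fact_erase (P : Multiset ℕ) (a : ℕ) (ha : a ∈ P) :
    (P.count a : ℚ) * ∏ i ∈ (P.erase a).toFinset, (((P.erase a).count i).factorial : ℚ)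
      = ∏ i ∈ P.toFinset, ((P.count i).factorial : ℚ) := by
  have hsub : (P.erase a).toFinset ⊆ P.toFinset :=
    Multiset.toFinset_subset.mpr (Multiset.subset_of_le (Multiset.erase_le a P))
  have h1 : (∏ i ∈ (P.erase a).toFinset, (((P.erase a).count i).factorial : ℚ))
      = ∏ i ∈ P.toFinset, (((P.erase a).count i).factorial : ℚ) := by
    refine Finset.prod_subset hsub fun i _ hi => ?_
    have : (P.erase a).count i = 0 :=
      Multiset.count_eq_zero.2 (fun h => hi (Multiset.mem_toFinset.2 h))
    rw [this]; norm_num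
  have haf : a ∈ P.toFinset := Multiset.mem_toFinset.2 ha
  rw [h1, ← Finset.mul_prod_erase _ _ haf, ← Finset.mul_prod_erase _ _ haf]
  have h2 : ∀ i ∈ P.toFinset.erase a, (((P.erase a).count i).factorial : ℚ)
      = ((P.count i).factorial : ℚ) := by
    intro i hi
    rw [Multiset.count_erase_of_ne (Finset.ne_of_mem_erase hi) P]
  rw [Finset.prod_congr rfl h2, Multiset.count_erase_self, ← mul_assoc]
  congr 1
  have hm : 0 < P.count a := Multiset.count_pos.2 ha
  rw [← Nat.cast_mul, Nat.mul_factorial_pred hm.ne']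

lemma key_num (P : Multiset ℕ) (h2 : 2 ≤ Multiset.card P) :
    ∑ a ∈ P.toFinset, Wq (P.erase a) = - Wq P := by
  obtain ⟨c, hc⟩ : ∃ c, Multiset.card P = c + 2 := ⟨Multiset.card P - 2, by omega⟩
  set D : ℚ := ∏ i ∈ P.toFinset, ((P.count i).factorial : ℚ) with hD
  have hDne : D ≠ 0 := by
    rw [hD]
    refine Finset.prod_ne_zero_iff.2 fun i _ => ?_
    exact_mod_cast (Nat.factorial_pos _).ne'
  have hterm : ∀ a ∈ P.toFinset, Wq (P.erase a)
      = (-1) ^ c * ((c.factorial : ℚ) * ((P.count a : ℚ) * ((P.sum : ℚ) - a))) / D := by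
    intro a ha
    have haP : a ∈ P := Multiset.mem_toFinset.1 ha
    have hcard : Multiset.card (P.erase a) = c + 1 := by
      rw [Multiset.card_erase_of_mem haP, hc]
      rfl
    have hsum : ((P.erase a).sum : ℚ) = (P.sum : ℚ) - a := by
      have h := congrArg Multiset.sum (Multiset.cons_erase haP)
      rw [Multiset.sum_cons] at h
      have h' : (a : ℚ) + ((P.erase a).sum : ℚ) = (P.sum : ℚ) := by
        exact_mod_cast congrArg (Nat.cast : ℕ → ℚ) h
      linarith
    have hprod := prod_fact_erase P a haP
    have hmne : (P.count a : ℚ) ≠ 0 := by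
      exact_mod_cast (Multiset.count_pos.2 haP).ne'
    have hEne : (∏ i ∈ (P.erase a).toFinset, (((P.erase a).count i).factorial : ℚ)) ≠ 0 := by
      refine Finset.prod_ne_zero_iff.2 fun i _ => ?_
      exact_mod_cast (Nat.factorial_pos _).ne'
    rw [Wq, hcard, hsum, Nat.add_sub_cancel, hD, ← hprod]
    field_simp
  rw [Finset.sum_congr rfl hterm]
  have hsumc : ∑ a ∈ P.toFinset, (P.count a : ℚ) * ((P.sum : ℚ) - a)
      = ((c : ℚ) + 1) * (P.sum : ℚ) := by
    have e1 : ∑ a ∈ P.toFinset, (P.count a : ℚ) * ((P.sum : ℚ) - a)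
        = (∑ a ∈ P.toFinset, (P.count a : ℚ)) * (P.sum : ℚ)
          - ∑ a ∈ P.toFinset, (P.count a : ℚ) * (a : ℚ) := by
      rw [Finset.sum_mul, ← Finset.sum_sub_distrib]
      refine Finset.sum_congr rfl fun a _ => by ring
    have e2 : ∑ a ∈ P.toFinset, (P.count a : ℚ) = (Multiset.card P : ℚ) := by
      rw [← Multiset.toFinset_sum_count_eq]
      push_cast
      rfl
    have e3 : ∑ a ∈ P.toFinset, (P.count a : ℚ) * (a : ℚ) = (P.sum : ℚ) := by
      have h := Finset.sum_multiset_map_count P (fun a : ℕ => (a : ℚ))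
      simp only [nsmul_eq_mul] at h
      rw [← h]
      exact (Nat.cast_multiset_sum P).symm
    rw [e1, e2, e3, hc]
    push_cast
    ring
  rw [← Finset.sum_div, ← Finset.mul_sum, ← Finset.mul_sum, hsumc, Wq, hc, ← hD]
  have : c + 2 - 1 = c + 1 := rfl
  rw [this]
  have hfac : ((c + 1).factorial : ℚ) = ((c : ℚ) + 1) * (c.factorial : ℚ) := by
    rw [Nat.factorial_succ]; push_cast; ring
  rw [hfac, pow_succ]
  field_simp

lemma sigPart_ext {j₁ j₂ : ℕ} {μ₁ : Nat.Partition j₁} {μ₂ : Nat.Partition j₂}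
    (h : μ₁.parts = μ₂.parts) : (⟨j₁, μ₁⟩ : Σ j, Nat.Partition j) = ⟨j₂, μ₂⟩ := by
  have hj : j₁ = j₂ := by rw [← μ₁.parts_sum, ← μ₂.parts_sum, h]
  subst hj
  exact congrArg _ (Nat.Partition.ext h)

/-- add a part `n - j` to a partition of `j` -/
def consPart (n j : ℕ) (hj : j ∈ Finset.Ico 1 n) (μ : Nat.Partition j) : Nat.Partition n where
  parts := (n - j) ::ₘ μ.parts
  parts_pos := by
    intro i hi
    rcases Multiset.mem_cons.mp hi with h | h
    · rw [Finset.mem_Ico] at hj; omega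
    · exact μ.parts_pos h
  parts_sum := by
    rw [Finset.mem_Ico] at hj
    rw [Multiset.sum_cons, μ.parts_sum]
    omega

/-- erase a part `a` from a partition of `n` -/
def erasePart {n : ℕ} (ν : Nat.Partition n) (a : ℕ) (ha : a ∈ ν.parts) :
    Nat.Partition (n - a) where
  parts := ν.parts.erase a
  parts_pos := fun hi => ν.parts_pos (Multiset.mem_of_mem_erase hi)
  parts_sum := by
    have h := congrArg Multiset.sum (Multiset.cons_erase ha)
    rw [Multiset.sum_cons, ν.parts_sum] at h
    omega

lemma part_lt_of_two_le {n : ℕ} (ν : Nat.Partition n) (h2 : 2 ≤ Multiset.card ν.parts)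
    {a : ℕ} (ha : a ∈ ν.parts) : a < n := by
  have hcard : 1 ≤ Multiset.card (ν.parts.erase a) := by
    rw [Multiset.card_erase_of_mem ha, Nat.pred_eq_sub_one]; omega
  obtain ⟨b, hb⟩ := Multiset.card_pos_iff_exists_mem.mp hcard
  have hbpos : 0 < b := ν.parts_pos (Multiset.mem_of_mem_erase hb)
  have hble : b ≤ (ν.parts.erase a).sum := Multiset.single_le_sum (fun x _ => Nat.zero_le x) _ hb
  have h := congrArg Multiset.sum (Multiset.cons_erase ha)
  rw [Multiset.sum_cons, ν.parts_sum] at h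
  omega

lemma lemA (x : Fin N → R) (n : ℕ) (hn : 1 ≤ n) :
    ∑ j ∈ Finset.Icc 1 n, qval x j * hsymmVal x (n - j) = n • hsymmVal x n := by
  classical
  have hins : Finset.Icc 1 n = insert n (Finset.Ico 1 n) := by
    ext i; simp only [Finset.mem_Icc, Finset.mem_Ico, Finset.mem_insert]; omega
  rw [hins, Finset.sum_insert (by simp [Finset.mem_Ico]), Nat.sub_self, hsymmVal_zero, mul_one]
  have hre : ∑ j ∈ Finset.Ico 1 n, qval x j * hsymmVal x (n - j)
      = ∑ ν : Nat.Partition n, (∑ a ∈ ν.parts.toFinset.filter (· < n),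
          algebraMap ℚ R (Wq (ν.parts.erase a))) * (ν.parts.map (fun p => hsymmVal x p)).prod := by
    have lhs_eq : ∑ j ∈ Finset.Ico 1 n, qval x j * hsymmVal x (n - j)
        = ∑ a ∈ (Finset.Ico 1 n).sigma (fun j => (Finset.univ : Finset (Nat.Partition j))),
            algebraMap ℚ R (Wq a.2.parts)
              * ((a.2.parts.map (fun p => hsymmVal x p)).prod * hsymmVal x (n - a.1)) := by
      rw [Finset.sum_sigma]
      refine Finset.sum_congr rfl fun j _ => ?_
      rw [qval, Finset.sum_mul]
      exact Finset.sum_congr rfl fun μ _ => by ring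
    have rhs_eq : ∑ ν : Nat.Partition n, (∑ a ∈ ν.parts.toFinset.filter (· < n),
          algebraMap ℚ R (Wq (ν.parts.erase a))) * (ν.parts.map (fun p => hsymmVal x p)).prod
        = ∑ b ∈ (Finset.univ : Finset (Nat.Partition n)).sigma
            (fun ν => ν.parts.toFinset.filter (· < n)),
            algebraMap ℚ R (Wq (b.1.parts.erase b.2))
              * (b.1.parts.map (fun p => hsymmVal x p)).prod := by
      rw [Finset.sum_sigma]
      exact Finset.sum_congr rfl fun ν _ => by rw [Finset.sum_mul]
    rw [lhs_eq, rhs_eq]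
    refine Finset.sum_bij'
      (fun a ha => ⟨consPart n a.1 (Finset.mem_sigma.mp ha).1 a.2, n - a.1⟩)
      (fun b hb => ⟨n - b.2, erasePart b.1 b.2
        (Multiset.mem_toFinset.mp (Finset.mem_filter.mp (Finset.mem_sigma.mp hb).2).1)⟩)
      ?_ ?_ ?_ ?_ ?_
    · rintro ⟨j, μ⟩ ha
      have hj : 1 ≤ j ∧ j < n := Finset.mem_Ico.mp (Finset.mem_sigma.mp ha).1
      refine Finset.mem_sigma.mpr ⟨Finset.mem_univ _, Finset.mem_filter.mpr ⟨?_, ?_⟩⟩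
      · exact Multiset.mem_toFinset.mpr (Multiset.mem_cons_self _ _)
      · show n - j < n
        omega
    · rintro ⟨ν, a⟩ hb
      have hfil := (Finset.mem_sigma.mp hb).2
      have haf := Finset.mem_filter.mp hfil
      have haP : a ∈ ν.parts := Multiset.mem_toFinset.mp haf.1
      have hapos : 0 < a := ν.parts_pos haP
      have halt : a < n := haf.2
      refine Finset.mem_sigma.mpr ⟨?_, Finset.mem_univ _⟩
      have hmem : 1 ≤ n - a ∧ n - a < n := by omega
      exact Finset.mem_Ico.mpr hmem
    · rintro ⟨j, μ⟩ ha
      exact sigPart_ext (Multiset.erase_cons_head _ _)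
    · rintro ⟨ν, a⟩ hb
      have hfil := (Finset.mem_sigma.mp hb).2
      have haf := Finset.mem_filter.mp hfil
      have haP : a ∈ ν.parts := Multiset.mem_toFinset.mp haf.1
      have halt : a < n := haf.2
      have hna : n - (n - a) = a := by omega
      refine Sigma.ext ?_ (heq_of_eq ?_)
      · refine Nat.Partition.ext ?_
        show (n - (n - a)) ::ₘ ν.parts.erase a = ν.parts
        rw [hna, Multiset.cons_erase haP]
      · show n - (n - a) = a
        exact hna
    · rintro ⟨j, μ⟩ ha
      show algebraMap ℚ R (Wq μ.parts) * _ = _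
      have hparts : (consPart n j (Finset.mem_sigma.mp ha).1 μ).parts = (n - j) ::ₘ μ.parts := rfl
      rw [hparts, Multiset.erase_cons_head, Multiset.map_cons, Multiset.prod_cons]
      ring
  rw [hre, qval, ← Finset.sum_add_distrib]
  have hper : ∀ ν : Nat.Partition n,
      algebraMap ℚ R (Wq ν.parts) * (ν.parts.map (fun p => hsymmVal x p)).prod
        + (∑ a ∈ ν.parts.toFinset.filter (· < n), algebraMap ℚ R (Wq (ν.parts.erase a)))
          * (ν.parts.map (fun p => hsymmVal x p)).prod
      = (if Multiset.card ν.parts = 1 then (n : R) else 0)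
          * (ν.parts.map (fun p => hsymmVal x p)).prod := by
    intro ν
    rw [← add_mul]
    congr 1
    rw [← map_sum, ← map_add]
    by_cases hone : Multiset.card ν.parts = 1
    · rw [if_pos hone]
      obtain ⟨b, hb⟩ := Multiset.card_eq_one.mp hone
      have hbn : b = n := by
        have hs := ν.parts_sum
        rw [hb, Multiset.sum_singleton] at hs
        exact hs
      have hb' : ν.parts = {n} := by rw [hb, hbn]
      have hfil : ν.parts.toFinset.filter (· < n) = ∅ := by
        rw [hb']
        ext i
        simp only [Finset.mem_filter, Multiset.toFinset_singleton, Finset.mem_singleton,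
          Finset.notMem_empty, iff_false, not_and]
        intro h; subst h; omega
      rw [hfil, Finset.sum_empty, add_zero, hb']
      have hWq : Wq {n} = (n : ℚ) := by
        rw [Wq]
        simp [Multiset.toFinset_singleton]
      rw [hWq, map_natCast]
    · rw [if_neg hone]
      have h2 : 2 ≤ Multiset.card ν.parts := by
        rcases Nat.lt_or_ge (Multiset.card ν.parts) 2 with h | h
        · have h01 : Multiset.card ν.parts = 0 := by omega
          exfalso
          have h0 := Multiset.card_eq_zero.mp h01
          have hs := ν.parts_sum
          rw [h0] at hs
          simp at hs
          omega
        · exact h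
      have hfil : ν.parts.toFinset.filter (· < n) = ν.parts.toFinset := by
        refine Finset.filter_true_of_mem fun a ha => ?_
        exact part_lt_of_two_le ν h2 (Multiset.mem_toFinset.mp ha)
      rw [hfil, key_num ν.parts h2, add_neg_cancel, map_zero]
  rw [Finset.sum_congr rfl (fun ν _ => hper ν)]
  have hP1pos : ∀ {i : ℕ}, i ∈ ({n} : Multiset ℕ) → 0 < i := by
    intro i hi; rw [Multiset.mem_singleton] at hi; omega
  set P1 : Nat.Partition n := ⟨{n}, hP1pos, Multiset.sum_singleton n⟩ with hP1
  have hiff : ∀ ν : Nat.Partition n, Multiset.card ν.parts = 1 ↔ ν = P1 := by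
    intro ν
    constructor
    · intro hone
      obtain ⟨b, hb⟩ := Multiset.card_eq_one.mp hone
      have hbn : b = n := by
        have hs := ν.parts_sum
        rw [hb, Multiset.sum_singleton] at hs
        exact hs
      refine Nat.Partition.ext ?_
      rw [hb, hbn, hP1]
    · intro h
      rw [h, hP1]
      simp
  have hred : ∀ ν : Nat.Partition n,
      (if Multiset.card ν.parts = 1 then (n : R) else 0)
          * (ν.parts.map (fun p => hsymmVal x p)).prod
        = if ν = P1 then (n : R) * (ν.parts.map (fun p => hsymmVal x p)).prod else 0 := by
    intro ν
    by_cases h : ν = P1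
    · rw [if_pos ((hiff ν).mpr h), if_pos h]
    · rw [if_neg (fun hc => h ((hiff ν).mp hc)), if_neg h, zero_mul]
  rw [Finset.sum_congr rfl (fun ν _ => hred ν), Finset.sum_ite_eq' Finset.univ P1,
    if_pos (Finset.mem_univ _)]
  show (n : R) * (({n} : Multiset ℕ).map (fun p => hsymmVal x p)).prod = n • hsymmVal x n
  rw [Multiset.map_singleton, Multiset.prod_singleton, nsmul_eq_mul]

lemma q_eq_p (x : Fin N → R) (n : ℕ) (hn : 1 ≤ n) : qval x n = pval x n := by
  induction n using Nat.strong_induction_on with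
  | _ n ih =>
    have hA := lemA x n hn
    have hB := lemB x n
    have hsplit : ∀ f : ℕ → R, ∑ j ∈ Finset.Icc 1 n, f j * hsymmVal x (n - j)
        = f n * hsymmVal x 0 + ∑ j ∈ Finset.Ico 1 n, f j * hsymmVal x (n - j) := by
      intro f
      have : Finset.Icc 1 n = insert n (Finset.Ico 1 n) := by
        ext i; simp [Finset.mem_Icc, Finset.mem_Ico, Finset.mem_insert]; omega
      rw [this, Finset.sum_insert (by simp [Finset.mem_Ico]), Nat.sub_self]
    rw [hsplit] at hA hB
    have hIH : ∑ j ∈ Finset.Ico 1 n, qval x j * hsymmVal x (n - j)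
        = ∑ j ∈ Finset.Ico 1 n, pval x j * hsymmVal x (n - j) := by
      refine Finset.sum_congr rfl fun j hj => ?_
      rw [Finset.mem_Ico] at hj
      rw [ih j hj.2 hj.1]
    rw [hIH] at hA
    have := hA.trans hB.symm
    simpa [hsymmVal_zero] using this

end Aux


/-- For `k ≥ 1`,
`p_k(X/(1-tX)) = ∑_{|μ|≥k} t^{|μ|-k} C(|μ|,k) (-1)^{ℓ(μ)-1} k(ℓ(μ)-1)!/∏ᵢ mᵢ(μ)! · h_μ(X)`:
the coefficient of `t^m` collects the partitions `μ` of `m + k`. -/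
theorem powerSum_shifted_eq_hsymm_expansion {R : Type*} [CommRing R] [Algebra ℚ R]
    (N : ℕ) (x : Fin N → R) (k : ℕ) (hk : 1 ≤ k) :
    (∑ r : Fin N, (PowerSeries.mk fun m => x r ^ (m + 1)) ^ k) =
      PowerSeries.mk fun m =>
        ∑ μ : Nat.Partition (m + k),
          algebraMap ℚ R (((m + k).choose k : ℚ) * (-1) ^ (Multiset.card μ.parts - 1) *
              (k * Nat.factorial (Multiset.card μ.parts - 1)) /
              ∏ i ∈ μ.parts.toFinset, (Nat.factorial (μ.parts.count i) : ℚ)) *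
            (μ.parts.map (fun p => hsymmVal x p)).prod := by
  obtain ⟨k', rfl⟩ : ∃ k', k = k' + 1 := ⟨k - 1, by omega⟩
  ext m
  rw [PowerSeries.coeff_mk, map_sum]
  have hL : ∀ r : Fin N, (PowerSeries.coeff m) ((PowerSeries.mk fun m => x r ^ (m + 1)) ^ (k' + 1))
      = ((m + k').choose k' : R) * x r ^ (m + k' + 1) := fun r => by
    rw [geom_pow, PowerSeries.coeff_mk]
  rw [Finset.sum_congr rfl (fun r _ => hL r), ← Finset.mul_sum]
  have hnat' := Nat.add_one_mul_choose_eq (m + k') k'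
  have hnat : ((m + (k' + 1)).choose (k' + 1) : ℚ) * ((k' : ℚ) + 1)
      = ((m : ℚ) + k' + 1) * ((m + k').choose k' : ℚ) := by
    exact_mod_cast hnat'.symm
  have hcoef : ∀ μ : Nat.Partition (m + (k' + 1)),
      (((m + (k' + 1)).choose (k' + 1) : ℚ) * (-1) ^ (Multiset.card μ.parts - 1) *
          ((k' + 1 : ℕ) * Nat.factorial (Multiset.card μ.parts - 1)) /
          ∏ i ∈ μ.parts.toFinset, (Nat.factorial (μ.parts.count i) : ℚ))
        = ((m + k').choose k' : ℚ) * Wq μ.parts := by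
    intro μ
    rw [Wq, μ.parts_sum, ← mul_div_assoc]
    congr 1
    push_cast
    linear_combination ((-1 : ℚ) ^ (Multiset.card μ.parts - 1)
      * (Nat.factorial (Multiset.card μ.parts - 1) : ℚ)) * hnat
  have hR : (∑ μ : Nat.Partition (m + (k' + 1)),
        algebraMap ℚ R (((m + (k' + 1)).choose (k' + 1) : ℚ) * (-1) ^ (Multiset.card μ.parts - 1) *
            ((k' + 1 : ℕ) * Nat.factorial (Multiset.card μ.parts - 1)) /
            ∏ i ∈ μ.parts.toFinset, (Nat.factorial (μ.parts.count i) : ℚ)) *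
          (μ.parts.map (fun p => hsymmVal x p)).prod)
      = ((m + k').choose k' : R) * qval x (m + (k' + 1)) := by
    rw [qval, Finset.mul_sum]
    refine Finset.sum_congr rfl fun μ _ => ?_
    rw [hcoef μ, map_mul, map_natCast, mul_assoc]
  rw [hR, q_eq_p x _ (by omega), pval]
  rfl
end

section
/- Let z be an indeterminate and X = {x_1,...,x_N}. The coefficient of u^i t^j in F(t,u) = (1+u)^z ∏_r (1 + (u/(1+u)) · t x_r/(1-t x_r)) equals ∑_{μ: ℓ(μ)≤i, |μ|=j} C(z-ℓ(μ), i-ℓ(μ)) m_μ(X), where C(z-l, i-l) is the polynomial binomial coefficient in z. -/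
/-- Monomial symmetric polynomial `m_μ` evaluated at a finite family: the sum of all distinct
monomials `∏ x_r^{f r}` whose multiset of nonzero exponents is `μ`. -/
def mval {ι A : Type*} [Fintype ι] [DecidableEq ι] [CommRing A] (x : ι → A) (μ : Multiset ℕ) : A :=
  ∑ f ∈ (Fintype.piFinset fun _ : ι => Finset.range (μ.sum + 1)).filter
      (fun f => (Finset.univ.val.map f).filter (· ≠ 0) = μ),
    ∏ r, x r ^ f r

/-- Polynomial binomial coefficient `C(a,b) = a(a-1)⋯(a-b+1)/b!` in a ℚ-algebra. -/
def pchoose {A : Type*} [CommRing A] [Algebra ℚ A] (a : A) (b : ℕ) : A :=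
  (∏ m ∈ Finset.range b, (a - (m : A))) * algebraMap ℚ A (1 / Nat.factorial b)

section Aux

variable {A : Type*} [CommRing A] [Algebra ℚ A]

lemma pchoose_zero' (a : A) : pchoose a 0 = 1 := by simp [pchoose]

lemma pchoose_pascal (z : A) (n : ℕ) :
    pchoose (z + 1) (n + 1) = pchoose z (n + 1) + pchoose z n := by
  have hfac : algebraMap ℚ A (1 / Nat.factorial n)
      = (n + 1 : A) * algebraMap ℚ A (1 / Nat.factorial (n + 1)) := by
    have : (1 / Nat.factorial n : ℚ) = (n + 1 : ℚ) * (1 / Nat.factorial (n + 1)) := by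
      rw [Nat.factorial_succ]
      push_cast
      field_simp
    rw [this, map_mul]
    push_cast
    ring
  have hprod : ∏ m ∈ Finset.range (n + 1), (z + 1 - (m : A))
      = (z + 1) * ∏ m ∈ Finset.range n, (z - (m : A)) := by
    rw [Finset.prod_range_succ']
    simp only [Nat.cast_add, Nat.cast_one, Nat.cast_zero, sub_zero]
    rw [mul_comm]
    congr 1
    apply Finset.prod_congr rfl
    intro m _
    ring
  rw [pchoose, pchoose, pchoose, hprod, Finset.prod_range_succ, hfac]
  ring

open PowerSeries

noncomputable def Gz (z : A) : PowerSeries A := PowerSeries.mk fun n => pchoose z n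
noncomputable def Vu (A : Type*) [CommRing A] : PowerSeries A :=
  PowerSeries.mk fun m => if m = 0 then 0 else (-1 : A) ^ (m - 1)

omit [Algebra ℚ A] in
lemma Vu_mul_one_add_X : Vu A * (1 + X) = X := by
  ext n
  rw [mul_add, mul_one, map_add]
  match n with
  | 0 => simp [Vu]
  | 1 => simp [Vu, coeff_succ_mul_X]
  | (n+2) => simp [Vu, coeff_succ_mul_X, pow_succ, coeff_X]

lemma Gz_succ (z : A) : Gz z * (1 + X) = Gz (z + 1) := by
  ext n
  rw [mul_add, mul_one, map_add]
  match n with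
  | 0 => simp [Gz, pchoose_zero']
  | (n+1) => simp [Gz, coeff_succ_mul_X, pchoose_pascal, add_comm]

lemma Gz_mul_Vu (z : A) : Gz z * Vu A = X * Gz (z - 1) := by
  have hu : IsUnit (1 + X : PowerSeries A) := by
    rw [isUnit_iff_constantCoeff]
    simp
  apply hu.mul_right_cancel
  calc Gz z * Vu A * (1 + X) = Gz z * X := by rw [mul_assoc, Vu_mul_one_add_X]
    _ = X * (Gz (z - 1) * (1 + X)) := by rw [Gz_succ, sub_add_cancel]; ring
    _ = X * Gz (z - 1) * (1 + X) := by ring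

lemma Gz_mul_Vu_pow (z : A) (l : ℕ) : Gz z * Vu A ^ l = X ^ l * Gz (z - l) := by
  induction l generalizing z with
  | zero => simp
  | succ l ih =>
      rw [pow_succ, ← mul_assoc, mul_right_comm, Gz_mul_Vu, mul_assoc, ih, pow_succ]
      have : z - 1 - (l : A) = z - ((l : ℕ) + 1 : ℕ) := by push_cast; ring
      rw [this]
      ring

lemma coeff_Gz_mul_Vu_pow (z : A) (l i : ℕ) :
    coeff (R := A) i (Gz z * Vu A ^ l) = if l ≤ i then pchoose (z - l) (i - l) else 0 := by
  rw [Gz_mul_Vu_pow, coeff_X_pow_mul']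
  split_ifs with h <;> simp [Gz]

variable {N : ℕ}

/-- multiset of nonzero values -/
def Mz {N : ℕ} (f : Fin N → ℕ) : Multiset ℕ := (Finset.univ.val.map f).filter (· ≠ 0)

lemma Mz_pos (f : Fin N → ℕ) {p : ℕ} (hp : p ∈ Mz f) : 0 < p := by
  simp only [Mz, Multiset.mem_filter] at hp
  exact Nat.pos_of_ne_zero hp.2

lemma Mz_sum (f : Fin N → ℕ) : (Mz f).sum = ∑ r, f r := by
  simp only [Mz]
  have h := Multiset.filter_add_not (· ≠ 0) (Finset.univ.val.map f)
  have h2 : (Multiset.filter (fun a => ¬ a ≠ 0) (Finset.univ.val.map f)).sum = 0 :=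
    Multiset.sum_eq_zero fun a ha => by simpa using Multiset.of_mem_filter ha
  calc (Multiset.filter (· ≠ 0) (Finset.univ.val.map f)).sum
      = (Multiset.filter (· ≠ 0) (Finset.univ.val.map f)).sum
        + (Multiset.filter (fun a => ¬ a ≠ 0) (Finset.univ.val.map f)).sum := by
        rw [h2, add_zero]
    _ = (Finset.univ.val.map f).sum := by rw [← Multiset.sum_add, h]
    _ = ∑ r, f r := rfl

lemma Mz_card (f : Fin N → ℕ) :
    Multiset.card (Mz f) = ∑ r, (if f r = 0 then 0 else 1) := by
  simp only [Mz]
  rw [← Multiset.countP_eq_card_filter, Multiset.countP_map]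
  have : (Multiset.filter (fun a => f a ≠ 0) Finset.univ.val)
      = (Finset.univ.filter (fun r => f r ≠ 0)).val := rfl
  rw [this, ← Finset.card_def, Finset.card_filter]
  simp [eq_comm, ite_not]

/-- partition of j from exponent function -/
def fpart {N : ℕ} (j : ℕ) (f : Fin N → ℕ) : Nat.Partition j :=
  if h : (Mz f).sum = j then ⟨Mz f, fun hp => Mz_pos f hp, h⟩
  else ⟨Multiset.replicate j 1,
    fun hp => by simp [Multiset.eq_of_mem_replicate hp], by simp⟩

omit [Algebra ℚ A] in
lemma key (D : ℕ → A) (x : Fin N → A) (j : ℕ) :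
    ∑ f ∈ Finset.finsuppAntidiag Finset.univ j, D (Multiset.card (Mz ⇑f)) * ∏ r, x r ^ f r
      = ∑ μ ∈ (Finset.univ : Finset (Nat.Partition j)),
          D (Multiset.card μ.parts) *
            ∑ f ∈ (Fintype.piFinset fun _ : Fin N => Finset.range (j + 1)).filter
              (fun f => Mz f = μ.parts), ∏ r, x r ^ f r := by
  classical
  have step1 : ∑ f ∈ Finset.finsuppAntidiag Finset.univ j,
      D (Multiset.card (Mz ⇑f)) * ∏ r, x r ^ f r
      = ∑ f ∈ (Fintype.piFinset fun _ : Fin N => Finset.range (j + 1)).filter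
          (fun f => ∑ r, f r = j), D (Multiset.card (Mz f)) * ∏ r, x r ^ f r := by
    apply Finset.sum_nbij' (fun (f : Fin N →₀ ℕ) => ⇑f)
      (fun f => Finsupp.equivFunOnFinite.symm f)
    · intro f hf
      rw [Finset.mem_finsuppAntidiag] at hf
      rw [Finset.mem_filter, Fintype.mem_piFinset]
      refine ⟨fun r => ?_, hf.1⟩
      rw [Finset.mem_range, Nat.lt_succ_iff, ← hf.1]
      exact Finset.single_le_sum (fun _ _ => Nat.zero_le _) (Finset.mem_univ r)
    · intro f hf
      rw [Finset.mem_filter] at hf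
      rw [Finset.mem_finsuppAntidiag]
      exact ⟨by simpa using hf.2, Finset.subset_univ _⟩
    · intro f _; exact Finsupp.equivFunOnFinite.symm_apply_apply f
    · intro f _; rfl
    · intro f _; rfl
  rw [step1]
  rw [← Finset.sum_fiberwise_of_maps_to (g := fpart j) (fun f _ => Finset.mem_univ _)]
  apply Finset.sum_congr rfl
  intro μ _
  rw [Finset.mul_sum]
  rw [Finset.filter_filter]
  have hset : ((Fintype.piFinset fun _ : Fin N => Finset.range (j + 1)).filter
      (fun f => (∑ r, f r = j) ∧ fpart j f = μ))
      = ((Fintype.piFinset fun _ : Fin N => Finset.range (j + 1)).filter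
      (fun f => Mz f = μ.parts)) := by
    apply Finset.filter_congr
    intro f _
    constructor
    · rintro ⟨hs, hp⟩
      rw [fpart, dif_pos (by rw [Mz_sum]; exact hs)] at hp
      exact congrArg Nat.Partition.parts hp
    · intro hm
      have hs : ∑ r, f r = j := by rw [← Mz_sum, hm, μ.parts_sum]
      refine ⟨hs, ?_⟩
      rw [fpart, dif_pos (by rw [Mz_sum]; exact hs)]
      exact Nat.Partition.ext hm
  rw [hset]
  apply Finset.sum_congr rfl
  intro f hf
  rw [Finset.mem_filter] at hf
  rw [hf.2]

end Aux

/-- The coefficient of `uⁱ tʲ` in `F(t,u) = (1+u)^z ∏_r (1 + (u/(1+u)) t x_r/(1-t x_r))`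
equals `∑_{ℓ(μ)≤i, |μ|=j} C(z-ℓ(μ), i-ℓ(μ)) m_μ(X)`.  Here `F` is a formal power series in the
outer variable `t` whose coefficients are power series in `u`; `(1+u)^z = ∑ᵢ C(z,i) uⁱ`,
`u/(1+u) = ∑_{m≥1} (-1)^{m-1} uᵐ`, `t x_r/(1-t x_r) = ∑_{m≥1} x_rᵐ tᵐ`. -/
theorem coeff_F_eq_monomial_expansion {A : Type*} [CommRing A] [Algebra ℚ A]
    (z : A) (N : ℕ) (x : Fin N → A) (i j : ℕ) :
    PowerSeries.coeff (R := A) i (PowerSeries.coeff (R := PowerSeries A) j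
      (PowerSeries.C (R := PowerSeries A) (PowerSeries.mk fun n => pchoose z n) *
        ∏ r : Fin N,
          (1 + PowerSeries.C (R := PowerSeries A)
                (PowerSeries.mk fun m => if m = 0 then 0 else (-1 : A) ^ (m - 1)) *
              PowerSeries.mk fun m =>
                if m = 0 then 0 else PowerSeries.C (R := A) (x r ^ m)))) =
      ∑ μ ∈ (Finset.univ : Finset (Nat.Partition j)).filter
          (fun μ => Multiset.card μ.parts ≤ i),
        pchoose (z - (Multiset.card μ.parts : A)) (i - Multiset.card μ.parts) *
          mval x μ.parts := by
  classical
  have hGz : (PowerSeries.mk fun n => pchoose z n) = Gz z := rfl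
  have hVu : (PowerSeries.mk fun m => if m = 0 then 0 else (-1 : A) ^ (m - 1)) = Vu A := rfl
  rw [hGz, hVu, PowerSeries.coeff_C_mul, PowerSeries.coeff_prod, Finset.mul_sum, map_sum]
  have hfac : ∀ (r : Fin N) (m : ℕ),
      PowerSeries.coeff (R := PowerSeries A) m (1 + PowerSeries.C (R := PowerSeries A) (Vu A) *
        PowerSeries.mk fun k => if k = 0 then 0 else PowerSeries.C (R := A) (x r ^ k))
      = Vu A ^ (if m = 0 then 0 else 1) * PowerSeries.C (R := A) (x r ^ m) := by
    intro r m
    rw [map_add, PowerSeries.coeff_C_mul, PowerSeries.coeff_mk]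
    cases m with
    | zero => simp
    | succ m => simp [PowerSeries.coeff_one]
  have hterm : ∀ f : Fin N →₀ ℕ,
      PowerSeries.coeff (R := A) i ((Gz z) * ∏ r, PowerSeries.coeff (R := PowerSeries A) (f r)
        (1 + PowerSeries.C (R := PowerSeries A) (Vu A) *
          PowerSeries.mk fun k => if k = 0 then 0 else PowerSeries.C (R := A) (x r ^ k)))
      = (if Multiset.card (Mz ⇑f) ≤ i then
          pchoose (z - (Multiset.card (Mz ⇑f) : A)) (i - Multiset.card (Mz ⇑f)) else 0)
        * ∏ r, x r ^ f r := by
    intro f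
    rw [Finset.prod_congr rfl (fun r _ => hfac r (f r)), Finset.prod_mul_distrib,
      Finset.prod_pow_eq_pow_sum, ← map_prod, ← Mz_card, ← mul_assoc,
      PowerSeries.coeff_mul_C, coeff_Gz_mul_Vu_pow]
  rw [Finset.sum_congr rfl (fun f _ => hterm f),
    key (fun l => if l ≤ i then pchoose (z - (l : A)) (i - l) else 0) x j]
  rw [Finset.sum_filter]
  apply Finset.sum_congr rfl
  intro μ _
  have hmval : ∑ f ∈ (Fintype.piFinset fun _ : Fin N => Finset.range (j + 1)).filter
      (fun f => Mz f = μ.parts), ∏ r, x r ^ f r = mval x μ.parts := by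
    simp only [mval, Mz, μ.parts_sum]
    congr 1
  rw [hmval]
  split_ifs with h
  · rfl
  · rw [zero_mul]
end

section
/- For any indeterminate z, integers i, j ≥ 1, and any partition μ of j, one has ∑_{k=0}^{min(i,j)} C(z-j, i-k) ⟨μ choose k⟩ = ∑_{k=0}^{min(i,j)} (-1)^{k-ℓ(μ)} C(z-k, i-k) ⟨μ choose k⟩, as an identity of polynomials in z. -/
section Aux
open Polynomial Finset

def cnt (n : ℕ) (f : Fin n → ℕ) (k : ℕ) : ℕ :=
  ((Finset.univ : Finset (Finset ((i : Fin n) × Fin (f i)))).filter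
    (fun s => s.card = k ∧ ∀ i : Fin n, ∃ c ∈ s, c.1 = i)).card

lemma one_add_X_pow (m : ℕ) : ((1 + X : ℚ[X]))^m = ∑ t : Finset (Fin m), (X:ℚ[X])^t.card := by
  have h : ((1+X:ℚ[X]))^m = ∏ _i : Fin m, (X + 1) := by
    rw [Finset.prod_const, Finset.card_univ, Fintype.card_fin, add_comm]
  rw [h, Finset.prod_add]
  simp [Finset.prod_const]

lemma one_add_X_pow_sub_one (m : ℕ) :
    ((1 + X : ℚ[X]))^m - 1 = ∑ t ∈ (Finset.univ : Finset (Finset (Fin m))).erase ∅, (X:ℚ[X])^t.card := by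
  rw [one_add_X_pow m, ← Finset.add_sum_erase _ _ (Finset.mem_univ (∅ : Finset (Fin m)))]
  simp

noncomputable def fiber {n : ℕ} {f : Fin n → ℕ} (s : Finset ((i : Fin n) × Fin (f i))) (i : Fin n) :
    Finset (Fin (f i)) :=
  s.preimage (@Sigma.mk (Fin n) (fun i => Fin (f i)) i) (by exact sigma_mk_injective.injOn)

@[simp] lemma mem_fiber {n : ℕ} {f : Fin n → ℕ} (s : Finset ((i : Fin n) × Fin (f i))) (i : Fin n)
    (x : Fin (f i)) : x ∈ fiber s i ↔ (⟨i, x⟩ : (i : Fin n) × Fin (f i)) ∈ s := by unfold fiber; exact Finset.mem_preimage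

lemma lemmaA (n : ℕ) (f : Fin n → ℕ) :
    (∏ i, ((1 + X : ℚ[X])^(f i) - 1)) =
      ∑ k ∈ Finset.range ((∑ i, f i) + 1), (cnt n f k : ℚ[X]) * X^k := by
  classical
  calc (∏ i, ((1 + X : ℚ[X])^(f i) - 1))
      = ∏ i, ∑ t ∈ (Finset.univ : Finset (Finset (Fin (f i)))).erase ∅, (X:ℚ[X])^t.card := by
        exact Finset.prod_congr rfl fun i _ => one_add_X_pow_sub_one (f i)
    _ = ∑ p ∈ Fintype.piFinset (fun i => (Finset.univ : Finset (Finset (Fin (f i)))).erase ∅),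
          ∏ i, (X:ℚ[X])^((p i).card) := Finset.prod_univ_sum _ _
    _ = ∑ p ∈ Fintype.piFinset (fun i => (Finset.univ : Finset (Finset (Fin (f i)))).erase ∅),
          (X:ℚ[X])^(∑ i, (p i).card) := by
        refine Finset.sum_congr rfl fun p _ => ?_
        rw [← Finset.prod_pow_eq_pow_sum]
    _ = ∑ s ∈ (Finset.univ : Finset (Finset ((i : Fin n) × Fin (f i)))).filter
          (fun s => ∀ i : Fin n, ∃ c ∈ s, c.1 = i), (X:ℚ[X])^(s.card) := by
        refine Finset.sum_nbij' (i := fun p => Finset.univ.sigma (fun i => p i))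
          (j := fun s => fiber s) ?_ ?_ ?_ ?_ ?_
        · intro p hp
          simp only [Fintype.mem_piFinset, Finset.mem_erase, Finset.mem_univ, and_true] at hp
          simp only [Finset.mem_filter, Finset.mem_univ, true_and]
          intro i
          obtain ⟨x, hx⟩ := Finset.nonempty_of_ne_empty (hp i)
          exact ⟨⟨i, x⟩, Finset.mem_sigma.2 ⟨Finset.mem_univ _, hx⟩, rfl⟩
        · intro s hs
          simp only [Finset.mem_filter, Finset.mem_univ, true_and] at hs
          simp only [Fintype.mem_piFinset, Finset.mem_erase, Finset.mem_univ, and_true]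
          intro i
          obtain ⟨c, hc, hc1⟩ := hs i
          obtain ⟨ci, cx⟩ := c
          cases hc1
          exact Finset.ne_empty_of_mem ((mem_fiber _ _ _).2 hc)
        · intro p hp
          funext i
          ext x
          simp [Finset.mem_preimage, Finset.mem_sigma]
        · intro s hs
          ext ⟨i, x⟩
          simp [Finset.mem_sigma, Finset.mem_preimage]
        · intro p hp
          rw [Finset.card_sigma]
    _ = ∑ k ∈ Finset.range ((∑ i, f i) + 1), (cnt n f k : ℚ[X]) * X^k := by
        rw [← Finset.sum_fiberwise_of_maps_to (g := Finset.card) (t := Finset.range ((∑ i, f i) + 1)) ?_ _]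
        · refine Finset.sum_congr rfl fun k _ => ?_
          rw [Finset.filter_filter]
          have : ((Finset.univ : Finset (Finset ((i : Fin n) × Fin (f i)))).filter
              (fun s => (∀ i : Fin n, ∃ c ∈ s, c.1 = i) ∧ s.card = k)) =
              ((Finset.univ : Finset (Finset ((i : Fin n) × Fin (f i)))).filter
              (fun s => s.card = k ∧ ∀ i : Fin n, ∃ c ∈ s, c.1 = i)) := by
            apply Finset.filter_congr
            intro s _
            exact and_comm
          rw [this]
          have h2 : ∀ S : Finset (Finset ((i : Fin n) × Fin (f i))),
              (∀ s ∈ S, s.card = k) → ∑ s ∈ S, (X:ℚ[X])^s.card = (S.card : ℚ[X]) * X^k := by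
            intro S hS
            rw [Finset.sum_congr rfl (fun s hs => by rw [hS s hs]),
              Finset.sum_const, nsmul_eq_mul]
          rw [h2 _ (fun s hs => (Finset.mem_filter.1 hs).2.1)]
          rfl
        · intro s _
          rw [Finset.mem_range, Nat.lt_succ_iff]
          calc s.card ≤ Fintype.card ((i : Fin n) × Fin (f i)) := Finset.card_le_univ s
            _ = ∑ i, f i := by simp [Fintype.card_sigma]

lemma evalA (n : ℕ) (f : Fin n → ℕ) (q : ℚ) :
    ∑ k ∈ Finset.range ((∑ i, f i) + 1), (cnt n f k : ℚ) * q^k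
      = ∏ i, ((1 + q)^(f i) - 1) := by
  have h := congrArg (Polynomial.eval q) (lemmaA n f)
  simpa [Polynomial.eval_finset_sum, Polynomial.eval_prod] using h.symm

lemma lemmaB (n : ℕ) (f : Fin n → ℕ) :
    (∑ k ∈ Finset.range ((∑ i, f i) + 1), (cnt n f k : ℚ[X]) * X^k)
      = ∑ k ∈ Finset.range ((∑ i, f i) + 1),
          (-1:ℚ[X])^(k+n) * (cnt n f k : ℚ[X]) * X^k * (1+X)^((∑ i, f i) - k) := by
  apply Polynomial.eq_of_infinite_eval_eq
  apply Set.Infinite.mono (s := Set.Ioi (0:ℚ))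
  swap
  · exact Set.Ioi_infinite 0
  intro q hq
  simp only [Set.mem_Ioi] at hq
  simp only [Set.mem_setOf_eq, Polynomial.eval_finset_sum, Polynomial.eval_mul,
    Polynomial.eval_pow, Polynomial.eval_natCast, Polynomial.eval_X, Polynomial.eval_add,
    Polynomial.eval_one, Polynomial.eval_neg]
  set j := ∑ i, f i with hj
  have hq1 : (1:ℚ) + q ≠ 0 := by positivity
  set t : ℚ := -q / (1+q) with ht
  have h1t : 1 + t = 1 / (1+q) := by
    rw [ht]
    field_simp
    ring
  have hprod : (1+t) * (1+q) = 1 := by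
    rw [h1t, one_div, inv_mul_cancel₀ hq1]
  -- termwise rewrite
  have step1 : ∀ k ∈ Finset.range (j+1),
      (-1:ℚ)^(k+n) * (cnt n f k : ℚ) * q^k * (1+q)^(j-k)
        = (-1:ℚ)^n * ((cnt n f k : ℚ) * t^k) * (1+q)^j := by
    intro k hk
    rw [Finset.mem_range, Nat.lt_succ_iff] at hk
    have e1 : t^k = (-1:ℚ)^k * q^k / (1+q)^k := by
      rw [ht, div_pow, neg_pow]
    have e2 : (1+q)^j = (1+q)^k * (1+q)^(j-k) := by
      rw [← pow_add]
      congr 1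
      omega
    rw [e1, e2]
    have hpk : ((1:ℚ)+q)^k ≠ 0 := pow_ne_zero _ hq1
    field_simp
    ring
  rw [Finset.sum_congr rfl step1, ← Finset.sum_mul, ← Finset.mul_sum, evalA n f t, evalA n f q]
  -- now pure product identity
  have e3 : (1+q)^j = ∏ i, (1+q)^(f i) := by
    rw [Finset.prod_pow_eq_pow_sum]
  rw [e3, mul_assoc, ← Finset.prod_mul_distrib]
  have e4 : ∀ i : Fin n, ((1+t)^(f i) - 1) * (1+q)^(f i) = -((1+q)^(f i) - 1) := by
    intro i
    have : (1+t)^(f i) * (1+q)^(f i) = 1 := by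
      rw [← mul_pow, hprod, one_pow]
    rw [sub_mul, this, one_mul]
    ring
  rw [Finset.prod_congr rfl (fun i _ => e4 i)]
  have e5 : ∏ i : Fin n, -(((1:ℚ)+q)^(f i) - 1) = (-1:ℚ)^n * ∏ i, ((1+q)^(f i) - 1) := by
    rw [Finset.prod_congr rfl (fun i _ => (neg_one_mul (((1:ℚ)+q)^(f i) - 1)).symm),
      Finset.prod_mul_distrib, Finset.prod_const, Finset.card_univ, Fintype.card_fin]
  rw [e5, ← mul_assoc, ← pow_add, Even.neg_one_pow (Even.add_self n), one_mul]


lemma coeff_one_add_pow (m d : ℕ) : ((1 + X : ℚ[X])^m).coeff d = (m.choose d : ℚ) :=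
  Polynomial.coeff_one_add_X_pow ℚ m d

lemma coeff_term (c : ℚ) (k m i : ℕ) :
    ((C c) * X^k * (1+X:ℚ[X])^m).coeff i
      = c * (if k ≤ i then (m.choose (i-k):ℚ) else 0) := by
  have h : (C c) * X^k * (1+X:ℚ[X])^m = C c * ((1+X)^m * X^k) := by ring
  rw [h, Polynomial.coeff_C_mul, Polynomial.coeff_mul_X_pow']
  split_ifs with hki
  · rw [coeff_one_add_pow]
  · simp

lemma coeff_term_nat (c k m i : ℕ) :
    (((c:ℚ[X])) * X^k * (1+X:ℚ[X])^m).coeff i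
      = (c:ℚ) * (if k ≤ i then (m.choose (i-k):ℚ) else 0) := by
  rw [← Polynomial.C_eq_natCast, coeff_term]

lemma coeff_term_sgn (e c k m i : ℕ) :
    ((-1:ℚ[X])^e * (c:ℚ[X]) * X^k * (1+X:ℚ[X])^m).coeff i
      = (-1:ℚ)^e * c * (if k ≤ i then (m.choose (i-k):ℚ) else 0) := by
  have h : (-1:ℚ[X])^e * (c:ℚ[X]) = C ((-1:ℚ)^e * c) := by
    rw [map_mul, map_pow, map_neg, Polynomial.C_1, Polynomial.C_eq_natCast]
  rw [h, coeff_term, mul_assoc]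

lemma lemmaC (n : ℕ) (f : Fin n → ℕ) (i N : ℕ) (hN : (∑ i, f i) ≤ N) :
    ∑ k ∈ Finset.range ((∑ i, f i)+1),
        (cnt n f k : ℚ) * (if k ≤ i then ((N - (∑ i, f i)).choose (i-k) : ℚ) else 0)
      = ∑ k ∈ Finset.range ((∑ i, f i)+1),
          (-1:ℚ)^(k+n) * (cnt n f k : ℚ) * (if k ≤ i then ((N-k).choose (i-k) : ℚ) else 0) := by
  set j := ∑ i, f i with hj
  have h2 : (∑ k ∈ Finset.range (j+1), (cnt n f k : ℚ[X]) * X^k * (1+X)^(N-j))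
      = ∑ k ∈ Finset.range (j+1), (-1:ℚ[X])^(k+n) * (cnt n f k : ℚ[X]) * X^k * (1+X)^(N-k) := by
    calc (∑ k ∈ Finset.range (j+1), (cnt n f k : ℚ[X]) * X^k * (1+X)^(N-j))
        = (∑ k ∈ Finset.range (j+1), (cnt n f k : ℚ[X]) * X^k) * (1+X)^(N-j) := by
          rw [Finset.sum_mul]
      _ = (∑ k ∈ Finset.range (j+1),
            (-1:ℚ[X])^(k+n) * (cnt n f k : ℚ[X]) * X^k * (1+X)^(j-k)) * (1+X)^(N-j) := by
          rw [lemmaB]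
      _ = ∑ k ∈ Finset.range (j+1),
            (-1:ℚ[X])^(k+n) * (cnt n f k : ℚ[X]) * X^k * (1+X)^(N-k) := by
          rw [Finset.sum_mul]
          refine Finset.sum_congr rfl fun k hk => ?_
          rw [Finset.mem_range, Nat.lt_succ_iff] at hk
          rw [mul_assoc, ← pow_add]
          congr 2
          omega
  have h3 := congrArg (fun p => Polynomial.coeff p i) h2
  simp only [Polynomial.finset_sum_coeff] at h3
  rw [Finset.sum_congr rfl (fun k _ => coeff_term_nat (cnt n f k) k (N-j) i),
    Finset.sum_congr rfl (fun k _ => coeff_term_sgn (k+n) (cnt n f k) k (N-k) i)] at h3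
  exact h3

lemma prod_range_natCast_sub (m b : ℕ) :
    ∏ c ∈ Finset.range b, ((m:ℚ) - c) = (m.descFactorial b : ℚ) := by
  induction b with
  | zero => simp
  | succ b ih =>
    rw [Finset.prod_range_succ, ih, Nat.descFactorial_succ]
    by_cases h : b ≤ m
    · rw [← Nat.cast_sub h]
      push_cast
      ring
    · have h0 : m.descFactorial b = 0 := Nat.descFactorial_eq_zero_iff_lt.2 (by omega)
      rw [h0]
      simp


lemma pchoose_natCast (m b : ℕ) : pchoose ((m:ℚ)) b = (m.choose b : ℚ) := by
  unfold pchoose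
  rw [prod_range_natCast_sub, Nat.descFactorial_eq_factorial_mul_choose]
  have hb : (b.factorial : ℚ) ≠ 0 := Nat.cast_ne_zero.2 b.factorial_ne_zero
  have : algebraMap ℚ ℚ (1 / Nat.factorial b) = 1 / (b.factorial : ℚ) := by
    simp
  rw [this]
  push_cast
  field_simp

lemma map_pchoose {A B : Type*} [CommRing A] [Algebra ℚ A] [CommRing B] [Algebra ℚ B]
    (φ : A →ₐ[ℚ] B) (a : A) (b : ℕ) : φ (pchoose a b) = pchoose (φ a) b := by
  unfold pchoose
  rw [map_mul, map_prod, AlgHom.commutes]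
  congr 1
  exact Finset.prod_congr rfl fun m _ => by rw [map_sub, map_natCast]

lemma lemmaD (n : ℕ) (f : Fin n → ℕ) (i N : ℕ) (hN : i + (∑ i, f i) ≤ N) :
    ∑ k ∈ Finset.range (min i (∑ i, f i) + 1),
        pchoose ((N:ℚ) - (∑ i, f i)) (i-k) * (cnt n f k : ℚ)
      = ∑ k ∈ Finset.range (min i (∑ i, f i) + 1),
          (-1:ℚ)^(k + n) * pchoose ((N:ℚ) - k) (i-k) * (cnt n f k : ℚ) := by
  set j := ∑ i, f i with hj
  have hjN : j ≤ N := by omega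
  have hC := lemmaC n f i N hjN
  rw [← Finset.sum_subset (Finset.range_subset_range.2 (by omega : min i j + 1 ≤ j + 1))
      (fun k hk hk2 => ?_),
    ← Finset.sum_subset (Finset.range_subset_range.2 (by omega : min i j + 1 ≤ j + 1))
      (fun k hk hk2 => ?_)] at hC
  · calc ∑ k ∈ Finset.range (min i j + 1), pchoose ((N:ℚ) - j) (i-k) * (cnt n f k : ℚ)
        = ∑ k ∈ Finset.range (min i j + 1),
            (cnt n f k : ℚ) * (if k ≤ i then ((N - j).choose (i-k) : ℚ) else 0) := by
          refine Finset.sum_congr rfl fun k hk => ?_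
          rw [Finset.mem_range, Nat.lt_succ_iff] at hk
          rw [if_pos (by omega : k ≤ i), ← Nat.cast_sub hjN, pchoose_natCast, mul_comm]
      _ = ∑ k ∈ Finset.range (min i j + 1),
            (-1:ℚ)^(k+n) * (cnt n f k : ℚ) * (if k ≤ i then ((N-k).choose (i-k) : ℚ) else 0) := hC
      _ = ∑ k ∈ Finset.range (min i j + 1),
            (-1:ℚ)^(k + n) * pchoose ((N:ℚ) - k) (i-k) * (cnt n f k : ℚ) := by
          refine Finset.sum_congr rfl fun k hk => ?_
          rw [Finset.mem_range, Nat.lt_succ_iff] at hk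
          rw [if_pos (by omega : k ≤ i), ← Nat.cast_sub (by omega : k ≤ N), pchoose_natCast]
          ring
  · rw [Finset.mem_range, Nat.lt_succ_iff] at hk
    rw [Finset.mem_range, Nat.lt_succ_iff, not_le] at hk2
    rw [if_neg (by omega : ¬ k ≤ i)]
    simp
  · rw [Finset.mem_range, Nat.lt_succ_iff] at hk
    rw [Finset.mem_range, Nat.lt_succ_iff, not_le] at hk2
    rw [if_neg (by omega : ¬ k ≤ i)]
    simp

lemma lemmaE (n : ℕ) (f : Fin n → ℕ) (i j : ℕ) (hj : j = ∑ i, f i) :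
    (∑ k ∈ Finset.range (min i j + 1),
        pchoose ((X:ℚ[X]) - (j:ℚ[X])) (i-k) * (cnt n f k : ℚ[X]))
      = ∑ k ∈ Finset.range (min i j + 1),
          (-1:ℚ[X])^(k+n) * pchoose ((X:ℚ[X]) - (k:ℚ[X])) (i-k) * (cnt n f k : ℚ[X]) := by
  subst hj
  apply Polynomial.eq_of_infinite_eval_eq
  apply Set.Infinite.mono (s := (Nat.cast '' Set.Ici (i + ∑ i, f i) : Set ℚ))
  swap
  · exact ((Set.Ici_infinite _).image (fun a _ b _ h => Nat.cast_injective h))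
  rintro q ⟨N, hN, rfl⟩
  simp only [Set.mem_Ici] at hN
  simp only [Set.mem_setOf_eq]
  have hev : ∀ (p : ℚ[X]) (b : ℕ),
      Polynomial.eval ((N:ℚ)) (pchoose p b) = pchoose (Polynomial.eval (N:ℚ) p) b := by
    intro p b
    have h := map_pchoose (Polynomial.aeval ((N:ℚ)) : ℚ[X] →ₐ[ℚ] ℚ) p b
    simpa [Polynomial.coe_aeval_eq_eval] using h
  simp only [Polynomial.eval_finset_sum, Polynomial.eval_mul, hev, Polynomial.eval_sub,
    Polynomial.eval_X, Polynomial.eval_natCast, Polynomial.eval_pow, Polynomial.eval_neg,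
    Polynomial.eval_one]
  exact lemmaD n f i N hN


end Aux

open Polynomial Finset in
/-- For `i, j ≥ 1` and any partition `μ` of `j`:
`∑_{k=0}^{min(i,j)} C(z-j, i-k) ⟨μ choose k⟩
  = ∑_{k=0}^{min(i,j)} (-1)^{k-ℓ(μ)} C(z-k, i-k) ⟨μ choose k⟩`
as an identity of polynomials in `z` (the sign is written `(-1)^{k+ℓ(μ)}`). -/
theorem pchoose_genBinom_symmetry {A : Type*} [CommRing A] [Algebra ℚ A] (z : A)
    (i j : ℕ) (hi : 1 ≤ i) (hj : 1 ≤ j) (μ : Nat.Partition j) :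
    (∑ k ∈ Finset.range (min i j + 1),
      pchoose (z - (j : A)) (i - k) * (genBinom μ.parts k : A)) =
      ∑ k ∈ Finset.range (min i j + 1),
        (-1 : A) ^ (k + Multiset.card μ.parts) *
          pchoose (z - (k : A)) (i - k) * (genBinom μ.parts k : A) := by
  classical
  set l := μ.parts.sort (· ≤ ·) with hl
  have hsum : j = ∑ i2 : Fin l.length, l.get i2 := by
    have h1 : ∑ i2 : Fin l.length, l.get i2 = l.sum := by
      simp only [List.get_eq_getElem]
      exact Fin.sum_univ_getElem l
    rw [h1, hl]
    rw [show (μ.parts.sort (· ≤ ·)).sum = (↑(μ.parts.sort (· ≤ ·)) : Multiset ℕ).sum from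
      (Multiset.sum_coe _).symm, Multiset.sort_eq, μ.parts_sum]
  have hlen : l.length = Multiset.card μ.parts := Multiset.length_sort _
  have hE := lemmaE l.length l.get i j hsum
  have h2 := congrArg (Polynomial.aeval z) hE
  simp only [map_sum, map_mul, map_pchoose (Polynomial.aeval z), map_sub, Polynomial.aeval_X,
    map_natCast, map_pow, map_neg, map_one] at h2
  rw [show Multiset.card μ.parts = l.length from hlen.symm]
  exact h2
end

section
/- Let λ be a partition, α a positive rational parameter, and set Z = {j-1-(i-1)/α : (i,j) ∈ λ} (a multiset of size |λ|). Define (x)_λ = ∏_{(i,j)∈λ} (x + j - 1 - (i-1)/α). Then for independent indeterminates x and y, (y-x)_λ/(y)_λ = ∑_{i=0}^{|λ|} ∑_{j≥0} (-1)^{i+j} (x^i/y^{i+j}) ∑_{μ: ℓ(μ)≤i, |μ|=j} C(|λ|-ℓ(μ), i-ℓ(μ)) m_μ(Z), as an identity of formal Laurent series in 1/y with polynomial coefficients in x. -/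
open Finset

/-- The rows of the Ferrers diagram of `lam`, in decreasing order. -/
def rows {n : ℕ} (lam : Nat.Partition n) : List ℕ := (lam.parts.sort (· ≤ ·)).reverse

/-- The cells of the Ferrers diagram of `lam`: `⟨i, j⟩` is the cell in (0-based) row `i`
and column `j`. -/
abbrev Cell {n : ℕ} (lam : Nat.Partition n) := (i : Fin (rows lam).length) × Fin ((rows lam).get i)

/-- The content `j - 1 - (i-1)/α` (with 1-based coordinates) of a cell of `lam`. -/
def content {n : ℕ} (lam : Nat.Partition n) (α : ℚ) (c : Cell lam) : ℚ :=
  (c.2 : ℚ) - (c.1 : ℚ) / α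

section Aux

variable {ι : Type*} [Fintype ι] [DecidableEq ι]

lemma count_supersets (T : Finset ι) (i : ℕ) :
    ((Finset.univ.powersetCard i).filter (fun S => T ⊆ S)).card =
      if T.card ≤ i then (Fintype.card ι - T.card).choose (i - T.card) else 0 := by
  split_ifs with h
  · rw [← Finset.card_compl, ← Finset.card_powersetCard]
    apply Finset.card_bij' (fun S _ => S \ T) (fun U _ => U ∪ T)
    · intro S hS
      simp only [mem_filter, mem_powersetCard] at hS
      simp only [mem_powersetCard]
      exact ⟨fun x hx => by simp [(Finset.mem_sdiff.1 hx).2],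
        by rw [Finset.card_sdiff_of_subset hS.2, hS.1.2]⟩
    · intro U hU
      simp only [mem_powersetCard] at hU
      have hdisj : Disjoint U T :=
        Finset.disjoint_left.2 fun x hxU hxT => by
          have := hU.1 hxU; simp at this; exact this hxT
      simp only [mem_filter, mem_powersetCard]
      refine ⟨⟨Finset.subset_univ _, ?_⟩, Finset.subset_union_right⟩
      rw [Finset.card_union_of_disjoint hdisj, hU.2, Nat.sub_add_cancel h]
    · intro S hS
      simp only [mem_filter, mem_powersetCard] at hS
      rw [Finset.sdiff_union_of_subset hS.2]
    · intro U hU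
      simp only [mem_powersetCard] at hU
      apply Finset.union_sdiff_cancel_right
      exact Finset.disjoint_left.2 fun x hxU hxT => by
        have := hU.1 hxU; simp at this; exact this hxT
  · rw [Finset.card_eq_zero, Finset.filter_eq_empty_iff]
    intro S hS hTS
    simp only [mem_powersetCard] at hS
    exact h (hS.2 ▸ Finset.card_le_card hTS)

/-- nonzero values of `f` as a multiset -/
def nza (f : ι → ℕ) : Multiset ℕ := (Finset.univ.val.map f).filter (· ≠ 0)

lemma nza_sum (f : ι → ℕ) : (nza f).sum = ∑ c, f c := by
  rw [nza, Multiset.filter_map]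
  have : ∑ c, f c = (Multiset.map f Finset.univ.val).sum := rfl
  rw [this]
  conv_rhs => rw [← Multiset.filter_add_not ((· ≠ 0) ∘ f) Finset.univ.val]
  rw [Multiset.map_add, Multiset.sum_add]
  have h0 : (Multiset.map f (Multiset.filter (fun a => ¬((· ≠ 0) ∘ f) a)
      Finset.univ.val)).sum = 0 := by
    apply Multiset.sum_eq_zero
    intro x hx
    simp only [Multiset.mem_map, Multiset.mem_filter] at hx
    obtain ⟨a, ⟨-, ha⟩, rfl⟩ := hx
    simpa using ha
  rw [h0, add_zero]

lemma nza_card (f : ι → ℕ) :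
    Multiset.card (nza f) = (Finset.univ.filter (fun c => f c ≠ 0)).card := by
  rw [nza, Multiset.filter_map, Multiset.card_map]; rfl

lemma nza_pos (f : ι → ℕ) {a : ℕ} (ha : a ∈ nza f) : 0 < a := by
  rw [nza, Multiset.mem_filter] at ha
  exact Nat.pos_of_ne_zero ha.2

/-- partition attached to `f`, junk value if the sum is wrong -/
def pOf (j : ℕ) (f : ι → ℕ) : Nat.Partition j :=
  if h : (nza f).sum = j then ⟨nza f, fun hm => nza_pos f hm, h⟩
  else ⟨Multiset.replicate j 1, fun hm => by simp [Multiset.eq_of_mem_replicate hm], by simp⟩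

lemma partB (z : ι → ℚ) (i j : ℕ) :
    ∑ μ ∈ (univ : Finset (Nat.Partition j)).filter (fun μ => Multiset.card μ.parts ≤ i),
      ((Fintype.card ι - Multiset.card μ.parts).choose (i - Multiset.card μ.parts) : ℚ)
        * mval z μ.parts
    = ∑ f ∈ (Fintype.piFinset fun _ : ι => Finset.range (j+1)).filter (fun f => ∑ c, f c = j),
        ((if Multiset.card (nza f) ≤ i then
            (Fintype.card ι - Multiset.card (nza f)).choose (i - Multiset.card (nza f))
          else 0 : ℕ) : ℚ)
          * ∏ c, z c ^ f c := by
  rw [← Finset.sum_fiberwise_of_maps_to (g := pOf j)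
    (t := (univ : Finset (Nat.Partition j))) (fun f _ => mem_univ _)]
  rw [Finset.sum_filter]
  apply Finset.sum_congr rfl
  intro μ _
  have hfib : ((Fintype.piFinset fun _ : ι => Finset.range (j+1)).filter
        (fun f => ∑ c, f c = j)).filter (fun f => pOf j f = μ)
      = (Fintype.piFinset fun _ : ι => Finset.range (μ.parts.sum + 1)).filter
        (fun f => nza f = μ.parts) := by
    rw [μ.parts_sum, Finset.filter_filter]
    apply Finset.filter_congr
    intro f hf
    constructor
    · rintro ⟨hsum, hp⟩
      have h : (nza f).sum = j := by rw [nza_sum]; exact hsum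
      rw [pOf, dif_pos h] at hp
      have := congrArg Nat.Partition.parts hp
      simpa using this
    · intro hn
      have hsum : ∑ c, f c = j := by rw [← nza_sum, hn, μ.parts_sum]
      have h : (nza f).sum = j := by rw [nza_sum]; exact hsum
      refine ⟨hsum, ?_⟩
      rw [pOf, dif_pos h]
      exact Nat.Partition.ext hn
  rw [hfib]
  by_cases hle : Multiset.card μ.parts ≤ i
  · rw [if_pos hle, mval, Finset.mul_sum]
    apply Finset.sum_congr rfl
    intro f hf
    have hn : nza f = μ.parts := (Finset.mem_filter.1 hf).2
    rw [hn, if_pos hle]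
  · rw [if_neg hle]
    symm; apply Finset.sum_eq_zero
    intro f hf
    have hn : nza f = μ.parts := (Finset.mem_filter.1 hf).2
    rw [hn, if_neg hle]
    simp

lemma partA (z : ι → ℚ) (i j : ℕ) :
    ∑ l ∈ ((univ : Finset ι).finsuppAntidiag (i+j)).filter (fun l => l.support.card = i),
        ∏ c ∈ l.support, z c ^ (l c - 1)
    = ∑ f ∈ (Fintype.piFinset fun _ : ι => Finset.range (j+1)).filter (fun f => ∑ c, f c = j),
        ((((univ : Finset ι).powersetCard i).filter
            (fun S => (univ.filter (fun c => f c ≠ 0)) ⊆ S)).card : ℚ)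
          * ∏ c, z c ^ f c := by
  have hrw : ∀ f : ι → ℕ,
      ((((univ : Finset ι).powersetCard i).filter
          (fun S => (univ.filter (fun c => f c ≠ 0)) ⊆ S)).card : ℚ) * ∏ c, z c ^ f c
      = ∑ _S ∈ ((univ : Finset ι).powersetCard i).filter
          (fun S => (univ.filter (fun c => f c ≠ 0)) ⊆ S), ∏ c, z c ^ f c := by
    intro f
    rw [Finset.sum_const, nsmul_eq_mul]
  simp_rw [hrw]
  rw [← Finset.sum_sigma (f := fun p : (_ : ι → ℕ) × Finset ι => ∏ c, z c ^ p.1 c)]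
  apply Finset.sum_nbij' (i := fun l => (⟨fun c => l c - 1, l.support⟩ :
      (_ : ι → ℕ) × Finset ι))
    (j := fun p => Finsupp.equivFunOnFinite.symm (fun c => if c ∈ p.2 then p.1 c + 1 else 0))
  · -- maps to
    intro l hl
    simp only [mem_filter, Finset.mem_finsuppAntidiag] at hl
    obtain ⟨⟨hsum, -⟩, hcard⟩ := hl
    have hsum' : ∑ c ∈ l.support, l c = i + j := by
      rw [← hsum]
      exact (Finset.sum_subset (Finset.subset_univ l.support)
        (fun c _ hc => Finsupp.notMem_support_iff.1 hc) :
          ∑ c ∈ l.support, l c = ∑ c, l c)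
    have hsupp : ∑ c, (l c - 1) = j := by
      have h1 : ∑ c, (l c - 1) = ∑ c ∈ l.support, (l c - 1) :=
        (Finset.sum_subset (Finset.subset_univ _) (fun c _ hc => by
          simp [Finsupp.notMem_support_iff.1 hc])).symm
      have h2 : ∑ c ∈ l.support, (l c - 1) + l.support.card
          = ∑ c ∈ l.support, l c := by
        rw [Finset.card_eq_sum_ones, ← Finset.sum_add_distrib]
        apply Finset.sum_congr rfl
        intro c hc
        have := Finsupp.mem_support_iff.1 hc
        omega
      omega
    simp only [Finset.mem_sigma, mem_filter, Fintype.mem_piFinset, Finset.mem_range,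
      mem_powersetCard]
    refine ⟨⟨fun c => ?_, hsupp⟩, ⟨Finset.subset_univ _, hcard⟩, ?_⟩
    · have : l c - 1 ≤ ∑ c, (l c - 1) :=
        Finset.single_le_sum (f := fun c => l c - 1) (fun _ _ => Nat.zero_le _) (mem_univ c)
      omega
    · intro c hc
      simp only [mem_filter] at hc
      exact Finsupp.mem_support_iff.2 (by omega)
  · -- reverse maps to
    rintro ⟨f, S⟩ hp
    simp only [Finset.mem_sigma, mem_filter, Fintype.mem_piFinset, Finset.mem_range,
      mem_powersetCard] at hp
    obtain ⟨⟨-, hsum⟩, ⟨-, hScard⟩, hsub⟩ := hp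
    have hfS : ∀ c, c ∉ S → f c = 0 := by
      intro c hc
      by_contra hfc
      exact hc (hsub (by simp [hfc]))
    have hsupport : (Finsupp.equivFunOnFinite.symm
        (fun c => if c ∈ S then f c + 1 else 0)).support = S := by
      ext c
      simp only [Finsupp.mem_support_iff, Finsupp.coe_equivFunOnFinite_symm]
      by_cases hc : c ∈ S <;> simp [hc]
    simp only [mem_filter, Finset.mem_finsuppAntidiag, hsupport, hScard, and_true]
    refine ⟨?_, Finset.subset_univ _⟩
    have hite : ∑ c, (if c ∈ S then f c + 1 else 0) = ∑ c ∈ S, (f c + 1) := by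
      rw [← Finset.sum_filter, Finset.filter_mem_eq_inter, Finset.univ_inter]
    have h2 : ∑ c ∈ S, f c = j := by
      rw [← hsum]
      exact (Finset.sum_subset (Finset.subset_univ S) (fun c _ hc => hfS c hc) :
        ∑ c ∈ S, f c = ∑ c, f c)
    show ∑ c, (if c ∈ S then f c + 1 else 0) = i + j
    rw [hite, Finset.sum_add_distrib, h2, Finset.sum_const, smul_eq_mul, mul_one,
      hScard, Nat.add_comm]
  · -- left inverse
    intro l hl
    apply Finsupp.ext
    intro c
    simp only [Finsupp.coe_equivFunOnFinite_symm, Finsupp.mem_support_iff]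
    by_cases hc : l c = 0 <;> simp [hc] <;> omega
  · -- right inverse
    rintro ⟨f, S⟩ hp
    simp only [Finset.mem_sigma, mem_filter, Fintype.mem_piFinset, Finset.mem_range,
      mem_powersetCard] at hp
    obtain ⟨⟨-, hsum⟩, ⟨-, hScard⟩, hsub⟩ := hp
    have hfS : ∀ c, c ∉ S → f c = 0 := by
      intro c hc
      by_contra hfc
      exact hc (hsub (by simp [hfc]))
    have hsupport : (Finsupp.equivFunOnFinite.symm
        (fun c => if c ∈ S then f c + 1 else 0)).support = S := by
      ext c
      simp only [Finsupp.mem_support_iff, Finsupp.coe_equivFunOnFinite_symm]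
      by_cases hc : c ∈ S <;> simp [hc]
    refine Sigma.ext ?_ (heq_of_eq ?_)
    · funext c
      simp only [Finsupp.coe_equivFunOnFinite_symm]
      by_cases hc : c ∈ S
      · simp [hc]
      · simp [hc, hfS c hc]
    · exact hsupport
  · -- terms agree
    intro l hl
    exact Finset.prod_subset (Finset.subset_univ _) (fun c _ hc => by
      rw [Finsupp.notMem_support_iff.1 hc]; simp)

lemma key_s16 (z : ι → ℚ) (i j : ℕ) :
    ∑ l ∈ ((univ : Finset ι).finsuppAntidiag (i+j)).filter (fun l => l.support.card = i),
        ∏ c ∈ l.support, z c ^ (l c - 1)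
    = ∑ μ ∈ (univ : Finset (Nat.Partition j)).filter (fun μ => Multiset.card μ.parts ≤ i),
        ((Fintype.card ι - Multiset.card μ.parts).choose (i - Multiset.card μ.parts) : ℚ)
          * mval z μ.parts := by
  rw [partA z i j, partB z i j]
  apply Finset.sum_congr rfl
  intro f _
  congr 2
  rw [count_supersets, nza_card]

end Aux

lemma card_cell {n : ℕ} (lam : Nat.Partition n) : Fintype.card (Cell lam) = n := by
  rw [Fintype.card_sigma]
  simp only [Fintype.card_fin]
  have h1 : ∑ i : Fin (rows lam).length, (rows lam).get i = (rows lam).sum :=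
    Fin.sum_univ_getElem (rows lam)
  rw [h1, rows, List.sum_reverse]
  have h2 : ((lam.parts.sort (· ≤ ·) : List ℕ) : Multiset ℕ) = lam.parts :=
    Multiset.sort_eq _ _
  calc (lam.parts.sort (· ≤ ·)).sum
      = ((lam.parts.sort (· ≤ ·) : List ℕ) : Multiset ℕ).sum := (Multiset.sum_coe _).symm
    _ = lam.parts.sum := by rw [h2]
    _ = n := lam.parts_sum

/-- Let `lam` be a partition of `n`, `α > 0` rational and `Z` the multiset of contents of `lam`.
Then `(y-x)_λ/(y)_λ = ∑_{i=0}^{|λ|} ∑_{j≥0} (-1)^{i+j} (xⁱ/y^{i+j})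
∑_{ℓ(μ)≤i, |μ|=j} C(|λ|-ℓ(μ), i-ℓ(μ)) m_μ(Z)`, as formal Laurent series in `w = 1/y` with
coefficients polynomial in `x`: the left side is `∏_{z∈Z} (1 - (x/y)/(1+z/y))`, each factor
expanded as `1 - ∑_{m≥1} (-(-z))^{m-1} x wᵐ`, and the `wᵐ`-coefficient on the right collects
the pairs `(i, j)` with `i + j = m`. -/
theorem content_ratio_monomial_expansion (n : ℕ) (lam : Nat.Partition n) (α : ℚ) (hα : 0 < α) :
    (∏ c : Cell lam,
      (PowerSeries.mk fun m =>
        if m = 0 then (1 : Polynomial ℚ)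
        else Polynomial.C (-(-(content lam α c)) ^ (m - 1)) * Polynomial.X)) =
      PowerSeries.mk fun m =>
        (-1 : Polynomial ℚ) ^ m *
          ∑ i ∈ Finset.range (min n m + 1),
            Polynomial.X ^ i *
              Polynomial.C
                (∑ μ ∈ (Finset.univ : Finset (Nat.Partition (m - i))).filter
                    (fun μ => Multiset.card μ.parts ≤ i),
                  (((n - Multiset.card μ.parts).choose (i - Multiset.card μ.parts) : ℕ) : ℚ) *
                    mval (content lam α) μ.parts) := by
  have hcard : Fintype.card (Cell lam) = n := card_cell lam
  set z : Cell lam → ℚ := content lam α with hz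
  refine PowerSeries.ext fun m => ?_
  rw [PowerSeries.coeff_mk, PowerSeries.coeff_prod]
  simp only [PowerSeries.coeff_mk]
  -- rewrite each summand
  have hterm : ∀ l ∈ (univ : Finset (Cell lam)).finsuppAntidiag m,
      (∏ c, (if l c = 0 then (1 : Polynomial ℚ)
          else Polynomial.C (-(-(z c)) ^ (l c - 1)) * Polynomial.X))
      = Polynomial.X ^ l.support.card *
          Polynomial.C ((-1 : ℚ)^m * ∏ c ∈ l.support, z c ^ (l c - 1)) := by
    intro l hl
    rw [Finset.mem_finsuppAntidiag] at hl
    have hsum' : ∑ c ∈ l.support, l c = m := by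
      rw [← hl.1]
      exact (Finset.sum_subset (Finset.subset_univ l.support)
        (fun c _ hc => Finsupp.notMem_support_iff.1 hc) :
          ∑ c ∈ l.support, l c = ∑ c, l c)
    have h1 : (∏ c, (if l c = 0 then (1 : Polynomial ℚ)
          else Polynomial.C (-(-(z c)) ^ (l c - 1)) * Polynomial.X))
        = ∏ c ∈ l.support, Polynomial.C (-(-(z c)) ^ (l c - 1)) * Polynomial.X := by
      rw [← Finset.prod_subset (Finset.subset_univ l.support)
        (fun c _ hc => by rw [if_pos (Finsupp.notMem_support_iff.1 hc)])]
      apply Finset.prod_congr rfl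
      intro c hc
      rw [if_neg (Finsupp.mem_support_iff.1 hc)]
    rw [h1, Finset.prod_mul_distrib, Finset.prod_const, ← map_prod]
    have h2 : ∏ c ∈ l.support, (-(-(z c)) ^ (l c - 1))
        = (-1 : ℚ)^m * ∏ c ∈ l.support, z c ^ (l c - 1) := by
      have h3 : ∀ c ∈ l.support, (-(-(z c)) ^ (l c - 1))
          = (-1 : ℚ)^(l c) * z c ^ (l c - 1) := by
        intro c hc
        have hk : 1 ≤ l c := Nat.one_le_iff_ne_zero.2 (Finsupp.mem_support_iff.1 hc)
        calc -(-(z c)) ^ (l c - 1) = -((-1 : ℚ)^(l c - 1) * z c ^ (l c - 1)) := by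
              rw [neg_pow]
          _ = (-1 : ℚ)^(l c - 1) * (-1) * z c ^ (l c - 1) := by ring
          _ = (-1 : ℚ)^(l c) * z c ^ (l c - 1) := by
              rw [← pow_succ, Nat.sub_add_cancel hk]
      rw [Finset.prod_congr rfl h3, Finset.prod_mul_distrib, Finset.prod_pow_eq_pow_sum,
        hsum']
    rw [h2, mul_comm]
  rw [Finset.sum_congr rfl hterm]
  -- group by support cardinality
  have hmaps : ∀ l ∈ (univ : Finset (Cell lam)).finsuppAntidiag m,
      l.support.card ∈ Finset.range (min n m + 1) := by
    intro l hl
    rw [Finset.mem_finsuppAntidiag] at hl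
    have hsum' : ∑ c ∈ l.support, l c = m := by
      rw [← hl.1]
      exact (Finset.sum_subset (Finset.subset_univ l.support)
        (fun c _ hc => Finsupp.notMem_support_iff.1 hc) :
          ∑ c ∈ l.support, l c = ∑ c, l c)
    have h1 : l.support.card ≤ m := by
      rw [← hsum', Finset.card_eq_sum_ones]
      exact Finset.sum_le_sum (fun c hc =>
        Nat.one_le_iff_ne_zero.2 (Finsupp.mem_support_iff.1 hc))
    have h2 : l.support.card ≤ n := by
      have h4 := Finset.card_le_univ l.support
      omega
    rw [Finset.mem_range]
    omega
  rw [← Finset.sum_fiberwise_of_maps_to hmaps, Finset.mul_sum]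
  apply Finset.sum_congr rfl
  intro i hi
  have him : i ≤ m := by
    rw [Finset.mem_range] at hi
    omega
  have hkey := key_s16 z i (m - i)
  rw [Nat.add_sub_cancel' him] at hkey
  calc ∑ l ∈ ((univ : Finset (Cell lam)).finsuppAntidiag m).filter
        (fun l => l.support.card = i),
        Polynomial.X ^ l.support.card *
          Polynomial.C ((-1 : ℚ)^m * ∏ c ∈ l.support, z c ^ (l c - 1))
      = ∑ l ∈ ((univ : Finset (Cell lam)).finsuppAntidiag m).filter
          (fun l => l.support.card = i),
          Polynomial.X ^ i * Polynomial.C ((-1 : ℚ)^m * ∏ c ∈ l.support, z c ^ (l c - 1)) := by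
        apply Finset.sum_congr rfl
        intro l hl
        rw [(Finset.mem_filter.1 hl).2]
    _ = Polynomial.X ^ i * Polynomial.C ((-1 : ℚ)^m *
          ∑ l ∈ ((univ : Finset (Cell lam)).finsuppAntidiag m).filter
            (fun l => l.support.card = i), ∏ c ∈ l.support, z c ^ (l c - 1)) := by
        rw [Finset.mul_sum, map_sum, Finset.mul_sum]
    _ = Polynomial.X ^ i * Polynomial.C ((-1 : ℚ)^m *
          ∑ μ ∈ (univ : Finset (Nat.Partition (m - i))).filter
              (fun μ => Multiset.card μ.parts ≤ i),
            ((Fintype.card (Cell lam) - Multiset.card μ.parts).choose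
              (i - Multiset.card μ.parts) : ℚ) * mval z μ.parts) := by
        rw [hkey]
    _ = (-1 : Polynomial ℚ) ^ m * (Polynomial.X ^ i * Polynomial.C
          (∑ μ ∈ (univ : Finset (Nat.Partition (m - i))).filter
              (fun μ => Multiset.card μ.parts ≤ i),
            (((n - Multiset.card μ.parts).choose (i - Multiset.card μ.parts) : ℕ) : ℚ) *
              mval z μ.parts)) := by
        rw [hcard, map_mul]
        have : Polynomial.C ((-1 : ℚ)^m) = (-1 : Polynomial ℚ)^m := by
          rw [map_pow, map_neg, map_one]
        rw [this]
        ring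
  done
end
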